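/- arXiv:1904.08334 — 7 statements merged into one kernel-verified Lean document; each statement's English description precedes it below -/
import Mathlib

section
/- The one-step Fourier amplification factor C satisfies the exact identity E[|C|²]·(1 − (a_x+a_y)k)² = 1 + 2d·√(ρ_x ρ_y)·ρ_xy·k + k·(c_x²ρ_x + c_y²ρ_y + 2c_x c_y·√(ρ_x ρ_y)·ρ_xy) + k²·(2b_x²ρ_x² + 2b_y²ρ_y² + d²ρ_x ρ_y(1 + 2ρ_xy²) + 4b_x b_y ρ_x ρ_y ρ_xy² + 4(b_x ρ_x + b_y ρ_y)·d·√(ρ_x ρ_y)·ρ_xy). -/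
open MeasureTheory ProbabilityTheory Real Filter
open scoped NNReal ENNReal

lemma gauss_int_pow (n : ℕ) : Integrable (fun x : ℝ => x ^ n * rexp (-x ^ 2 / 2)) := by
  have h := integrable_rpow_mul_exp_neg_mul_sq (b := (1:ℝ)/2) (by norm_num)
    (s := (n : ℝ)) (lt_of_lt_of_le (by norm_num) (Nat.cast_nonneg n))
  have e : (fun x : ℝ => x ^ (n : ℝ) * rexp (-(1/2) * x ^ 2))
      = fun x : ℝ => x ^ n * rexp (-x ^ 2 / 2) := by
    funext x
    rw [Real.rpow_natCast, show -((1:ℝ)/2) * x ^ 2 = -x ^ 2 / 2 by ring]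
  rwa [e] at h

lemma gauss_tendsto_top (m : ℕ) :
    Tendsto (fun x : ℝ => x ^ m * rexp (-x ^ 2 / 2)) atTop (nhds 0) := by
  have hhalf : Tendsto (fun x : ℝ => (1/2 : ℝ) * x) atTop atTop :=
    Tendsto.const_mul_atTop (by norm_num) tendsto_id
  have hexp : Tendsto (fun x : ℝ => rexp (-(1/2 : ℝ) * x)) atTop (nhds 0) := by
    have h0 := Real.tendsto_exp_neg_atTop_nhds_zero.comp hhalf
    exact Tendsto.congr (fun x => by simp only [Function.comp_apply]; ring_nf) h0
  have h := ((rpow_mul_exp_neg_mul_sq_isLittleO_exp_neg (b := (1:ℝ)/2) (by norm_num)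
    (m : ℝ)).isBigO.trans_tendsto hexp)
  exact Tendsto.congr (fun x => by
    rw [Real.rpow_natCast, show -((1:ℝ)/2) * x ^ 2 = -x ^ 2 / 2 by ring]) h

lemma gauss_tendsto_bot (m : ℕ) :
    Tendsto (fun x : ℝ => x ^ m * rexp (-x ^ 2 / 2)) atBot (nhds 0) := by
  have h := (gauss_tendsto_top m).comp tendsto_neg_atBot_atTop
  have h2 := h.const_mul ((-1 : ℝ) ^ m)
  have h3 : ∀ x : ℝ, (-1 : ℝ) ^ m * ((-x) ^ m * rexp (-(-x) ^ 2 / 2))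
      = x ^ m * rexp (-x ^ 2 / 2) := by
    intro x
    rw [neg_sq, ← mul_assoc, ← mul_pow, neg_mul_neg, one_mul]
  have h4 : Tendsto (fun x : ℝ => (-1 : ℝ) ^ m * ((-x) ^ m * rexp (-(-x) ^ 2 / 2)))
      atBot (nhds 0) := by simpa using h2
  exact Tendsto.congr h3 h4

lemma gauss_hasDeriv (x : ℝ) :
    HasDerivAt (fun y : ℝ => rexp (-y ^ 2 / 2)) (-x * rexp (-x ^ 2 / 2)) x := by
  have h1 : HasDerivAt (fun y : ℝ => -y ^ 2 / 2) (-x) x := by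
    have h0 := ((hasDerivAt_pow 2 x).neg).div_const 2
    have e : -(((2:ℕ) : ℝ) * x ^ (2 - 1)) / 2 = -x := by push_cast; ring
    rw [e] at h0
    exact h0
  have h2 := h1.exp
  have h3 : rexp (-x ^ 2 / 2) * -x = -x * rexp (-x ^ 2 / 2) := by ring
  rw [h3] at h2
  exact h2

lemma gauss_L1 : ∫ x : ℝ, x ^ 1 * rexp (-x ^ 2 / 2) = 0 := by
  have hd : ∀ x : ℝ, HasDerivAt (fun y : ℝ => -rexp (-y ^ 2 / 2))
      (x ^ 1 * rexp (-x ^ 2 / 2)) x := by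
    intro x
    have h0 := (gauss_hasDeriv x).neg
    have e : x ^ 1 * rexp (-x ^ 2 / 2) = -(-x * rexp (-x ^ 2 / 2)) := by ring
    rw [e]
    exact h0
  have hbot : Tendsto (fun x : ℝ => -rexp (-x ^ 2 / 2)) atBot (nhds 0) := by
    simpa using (gauss_tendsto_bot 0).neg
  have htop : Tendsto (fun x : ℝ => -rexp (-x ^ 2 / 2)) atTop (nhds 0) := by
    simpa using (gauss_tendsto_top 0).neg
  simpa using integral_of_hasDerivAt_of_tendsto hd (gauss_int_pow 1) hbot htop

lemma gauss_L2 : ∫ x : ℝ, (x ^ 2 * rexp (-x ^ 2 / 2) - x ^ 0 * rexp (-x ^ 2 / 2)) = 0 := by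
  have hd : ∀ x : ℝ, HasDerivAt (fun y : ℝ => -(y * rexp (-y ^ 2 / 2)))
      (x ^ 2 * rexp (-x ^ 2 / 2) - x ^ 0 * rexp (-x ^ 2 / 2)) x := by
    intro x
    have h0 := ((hasDerivAt_id' (x := x)).mul (gauss_hasDeriv x)).neg
    have e : x ^ 2 * rexp (-x ^ 2 / 2) - x ^ 0 * rexp (-x ^ 2 / 2)
        = -(1 * rexp (-x ^ 2 / 2) + x * (-x * rexp (-x ^ 2 / 2))) := by ring
    rw [e]
    exact h0
  have hbot : Tendsto (fun x : ℝ => -(x * rexp (-x ^ 2 / 2))) atBot (nhds 0) := by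
    have := (gauss_tendsto_bot 1).neg
    simpa [pow_one] using this
  have htop : Tendsto (fun x : ℝ => -(x * rexp (-x ^ 2 / 2))) atTop (nhds 0) := by
    have := (gauss_tendsto_top 1).neg
    simpa [pow_one] using this
  simpa using integral_of_hasDerivAt_of_tendsto hd
    ((gauss_int_pow 2).sub (gauss_int_pow 0)) hbot htop

lemma gauss_L3 : ∫ x : ℝ, x ^ 3 * rexp (-x ^ 2 / 2) = 0 := by
  have hd : ∀ x : ℝ, HasDerivAt (fun y : ℝ => -((y ^ 2 + 2) * rexp (-y ^ 2 / 2)))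
      (x ^ 3 * rexp (-x ^ 2 / 2)) x := by
    intro x
    have h0 := (((hasDerivAt_pow 2 x).add_const 2).mul (gauss_hasDeriv x)).neg
    have e : x ^ 3 * rexp (-x ^ 2 / 2)
        = -((((2:ℕ) : ℝ) * x ^ (2 - 1) * rexp (-x ^ 2 / 2))
            + (x ^ 2 + 2) * (-x * rexp (-x ^ 2 / 2))) := by push_cast; ring
    rw [e]
    exact h0
  have hbot : Tendsto (fun x : ℝ => -((x ^ 2 + 2) * rexp (-x ^ 2 / 2))) atBot (nhds 0) := by
    have h1 := ((gauss_tendsto_bot 2).add ((gauss_tendsto_bot 0).const_mul 2)).neg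
    have h3 : ∀ x : ℝ, -(x ^ 2 * rexp (-x ^ 2 / 2) + 2 * (x ^ 0 * rexp (-x ^ 2 / 2)))
        = -((x ^ 2 + 2) * rexp (-x ^ 2 / 2)) := fun x => by ring
    have h4 : Tendsto (fun x : ℝ => -(x ^ 2 * rexp (-x ^ 2 / 2)
        + 2 * (x ^ 0 * rexp (-x ^ 2 / 2)))) atBot (nhds 0) := by simpa using h1
    exact Tendsto.congr h3 h4
  have htop : Tendsto (fun x : ℝ => -((x ^ 2 + 2) * rexp (-x ^ 2 / 2))) atTop (nhds 0) := by
    have h1 := ((gauss_tendsto_top 2).add ((gauss_tendsto_top 0).const_mul 2)).neg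
    have h3 : ∀ x : ℝ, -(x ^ 2 * rexp (-x ^ 2 / 2) + 2 * (x ^ 0 * rexp (-x ^ 2 / 2)))
        = -((x ^ 2 + 2) * rexp (-x ^ 2 / 2)) := fun x => by ring
    have h4 : Tendsto (fun x : ℝ => -(x ^ 2 * rexp (-x ^ 2 / 2)
        + 2 * (x ^ 0 * rexp (-x ^ 2 / 2)))) atTop (nhds 0) := by simpa using h1
    exact Tendsto.congr h3 h4
  simpa using integral_of_hasDerivAt_of_tendsto hd (gauss_int_pow 3) hbot htop

lemma gauss_L4 :
    ∫ x : ℝ, (x ^ 4 * rexp (-x ^ 2 / 2) - 3 * (x ^ 2 * rexp (-x ^ 2 / 2))) = 0 := by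
  have hd : ∀ x : ℝ, HasDerivAt (fun y : ℝ => -(y ^ 3 * rexp (-y ^ 2 / 2)))
      (x ^ 4 * rexp (-x ^ 2 / 2) - 3 * (x ^ 2 * rexp (-x ^ 2 / 2))) x := by
    intro x
    have h0 := ((hasDerivAt_pow 3 x).mul (gauss_hasDeriv x)).neg
    have e : x ^ 4 * rexp (-x ^ 2 / 2) - 3 * (x ^ 2 * rexp (-x ^ 2 / 2))
        = -((((3:ℕ) : ℝ) * x ^ (3 - 1) * rexp (-x ^ 2 / 2))
            + x ^ 3 * (-x * rexp (-x ^ 2 / 2))) := by push_cast; ring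
    rw [e]
    exact h0
  have hbot : Tendsto (fun x : ℝ => -(x ^ 3 * rexp (-x ^ 2 / 2))) atBot (nhds 0) := by
    simpa using (gauss_tendsto_bot 3).neg
  have htop : Tendsto (fun x : ℝ => -(x ^ 3 * rexp (-x ^ 2 / 2))) atTop (nhds 0) := by
    simpa using (gauss_tendsto_top 3).neg
  simpa using integral_of_hasDerivAt_of_tendsto hd
    ((gauss_int_pow 4).sub ((gauss_int_pow 2).const_mul 3)) hbot htop

lemma gauss_G0 : ∫ x : ℝ, x ^ 0 * rexp (-x ^ 2 / 2) = Real.sqrt (2 * π) := by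
  have h := integral_gaussian (1/2 : ℝ)
  rw [show π / (1/2 : ℝ) = 2 * π by ring] at h
  rw [← h]
  congr 1
  funext x
  rw [pow_zero, one_mul]
  congr 1
  ring

lemma gauss_G2 : ∫ x : ℝ, x ^ 2 * rexp (-x ^ 2 / 2) = Real.sqrt (2 * π) := by
  have hsub := integral_sub (gauss_int_pow 2) (gauss_int_pow 0)
  rw [gauss_L2] at hsub
  have := gauss_G0
  linarith

lemma gauss_G4 : ∫ x : ℝ, x ^ 4 * rexp (-x ^ 2 / 2) = 3 * Real.sqrt (2 * π) := by
  have hsub := integral_sub (gauss_int_pow 4) ((gauss_int_pow 2).const_mul 3)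
  rw [gauss_L4, integral_const_mul, gauss_G2] at hsub
  linarith

lemma gauss_conv (g : ℝ → ℝ) :
    ∫ x, g x ∂(gaussianReal 0 1)
      = (Real.sqrt (2 * π))⁻¹ * ∫ x, g x * rexp (-x ^ 2 / 2) := by
  rw [gaussianReal_of_var_ne_zero 0 one_ne_zero,
    show gaussianPDF 0 1 = fun x => (((gaussianPDFReal 0 1 x).toNNReal : ℝ≥0) : ℝ≥0∞) from rfl,
    integral_withDensity_eq_integral_smul ((measurable_gaussianPDFReal 0 1).real_toNNReal) g,
    ← integral_const_mul]
  congr 1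
  funext x
  rw [NNReal.smul_def, smul_eq_mul, Real.coe_toNNReal _ (gaussianPDFReal_nonneg _ _ _)]
  simp only [gaussianPDFReal, NNReal.coe_one, mul_one, sub_zero]
  ring

lemma gauss_int_pow' (n : ℕ) : Integrable (fun x : ℝ => x ^ n) (gaussianReal 0 1) := by
  rw [gaussianReal_of_var_ne_zero 0 one_ne_zero,
    show gaussianPDF 0 1 = fun x => (((gaussianPDFReal 0 1 x).toNNReal : ℝ≥0) : ℝ≥0∞) from rfl,
    integrable_withDensity_iff_integrable_smul ((measurable_gaussianPDFReal 0 1).real_toNNReal)]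
  have e : (fun x : ℝ => ((gaussianPDFReal 0 1 x).toNNReal : ℝ≥0) • x ^ n)
      = fun x : ℝ => (Real.sqrt (2 * π))⁻¹ * (x ^ n * rexp (-x ^ 2 / 2)) := by
    funext x
    rw [NNReal.smul_def, smul_eq_mul, Real.coe_toNNReal _ (gaussianPDFReal_nonneg _ _ _)]
    simp only [gaussianPDFReal, NNReal.coe_one, mul_one, sub_zero]
    ring
  rw [e]
  exact (gauss_int_pow n).const_mul _

lemma sqrt_two_pi_ne : Real.sqrt (2 * π) ≠ 0 :=
  ne_of_gt (Real.sqrt_pos.mpr (by positivity))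

lemma gmom0 : ∫ x, x ^ 0 ∂(gaussianReal 0 1) = 1 := by
  rw [gauss_conv, gauss_G0, inv_mul_cancel₀ sqrt_two_pi_ne]

lemma gmom1 : ∫ x, x ^ 1 ∂(gaussianReal 0 1) = 0 := by
  rw [gauss_conv, gauss_L1, mul_zero]

lemma gmom2 : ∫ x, x ^ 2 ∂(gaussianReal 0 1) = 1 := by
  rw [gauss_conv, gauss_G2, inv_mul_cancel₀ sqrt_two_pi_ne]

lemma gmom3 : ∫ x, x ^ 3 ∂(gaussianReal 0 1) = 0 := by
  rw [gauss_conv, gauss_L3, mul_zero]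

lemma gmom4 : ∫ x, x ^ 4 ∂(gaussianReal 0 1) = 3 := by
  rw [gauss_conv, gauss_G4, show (Real.sqrt (2*π))⁻¹ * (3 * Real.sqrt (2*π))
    = 3 * ((Real.sqrt (2*π))⁻¹ * Real.sqrt (2*π)) by ring,
    inv_mul_cancel₀ sqrt_two_pi_ne, mul_one]

open MeasureTheory ProbabilityTheory Real

theorem second_moment_one_step_amplification_factor
    {Ω : Type*} [MeasureSpace Ω] [IsProbabilityMeasure (ℙ : Measure Ω)]
    (ρx ρy ρxy hx hy ξ η k : ℝ)
    (hρx0 : 0 ≤ ρx) (hρx1 : ρx < 1) (hρy0 : 0 ≤ ρy) (hρy1 : ρy < 1)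
    (hρxy : |ρxy| ≤ 1) (hhx : 0 < hx) (hhy : 0 < hy) (hk : 0 < k)
    (ax bx cx ay byy cy dd : ℝ)
    (hax : ax = -(2 * (Real.sin (ξ * hx / 2)) ^ 2) / hx ^ 2)
    (hbx : bx = -((Real.sin (ξ * hx)) ^ 2) / (2 * hx ^ 2))
    (hcx : cx = Real.sin (ξ * hx) / hx)
    (hay : ay = -(2 * (Real.sin (η * hy / 2)) ^ 2) / hy ^ 2)
    (hby : byy = -((Real.sin (η * hy)) ^ 2) / (2 * hy ^ 2))
    (hcy : cy = Real.sin (η * hy) / hy)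
    (hd : dd = -(Real.sin (ξ * hx) * Real.sin (η * hy)) / (hx * hy))
    (Z Z' : Ω → ℝ) (hZm : Measurable Z) (hZ'm : Measurable Z')
    (hindep : IndepFun Z Z' ℙ)
    (hZ : Measure.map Z ℙ = gaussianReal 0 1)
    (hZ' : Measure.map Z' ℙ = gaussianReal 0 1)
    (Zt : Ω → ℝ)
    (hZt : ∀ ω, Zt ω = ρxy * Z ω + Real.sqrt (1 - ρxy ^ 2) * Z' ω)
    (C : Ω → ℂ)
    (hC : ∀ ω, C ω =
      (1 - Complex.I * (cx * Real.sqrt (ρx * k) * Z ω : ℝ)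
         - Complex.I * (cy * Real.sqrt (ρy * k) * Zt ω : ℝ)
         + (bx * ρx * k * ((Z ω) ^ 2 - 1) : ℝ)
         + (byy * ρy * k * ((Zt ω) ^ 2 - 1) : ℝ)
         + (dd * Real.sqrt (ρx * ρy) * k * (Z ω * Zt ω) : ℝ))
      / ((1 - (ax + ay) * k : ℝ))) :
    (∫ ω, ‖C ω‖ ^ 2 ∂ℙ) * (1 - (ax + ay) * k) ^ 2 =
      1 + 2 * dd * Real.sqrt (ρx * ρy) * ρxy * k
        + k * (cx ^ 2 * ρx + cy ^ 2 * ρy + 2 * cx * cy * Real.sqrt (ρx * ρy) * ρxy)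
        + k ^ 2 * (2 * bx ^ 2 * ρx ^ 2 + 2 * byy ^ 2 * ρy ^ 2
            + dd ^ 2 * ρx * ρy * (1 + 2 * ρxy ^ 2)
            + 4 * bx * byy * ρx * ρy * ρxy ^ 2
            + 4 * (bx * ρx + byy * ρy) * dd * Real.sqrt (ρx * ρy) * ρxy) := by
  have hxy2 : ρxy ^ 2 ≤ 1 := by
    have h := abs_le.mp hρxy
    nlinarith [h.1, h.2]
  have haxle : ax ≤ 0 := by
    rw [hax]
    apply div_nonpos_of_nonpos_of_nonneg
    · simp only [neg_nonpos]; positivity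
    · positivity
  have hayle : ay ≤ 0 := by
    rw [hay]
    apply div_nonpos_of_nonpos_of_nonneg
    · simp only [neg_nonpos]; positivity
    · positivity
  have hD : 0 < 1 - (ax + ay) * k := by
    nlinarith [mul_nonneg (neg_nonneg.mpr (add_nonpos haxle hayle)) hk.le]
  have hiZ : ∀ n : ℕ, Integrable (fun ω => Z ω ^ n) ℙ := by
    intro n
    have h := gauss_int_pow' n
    rw [← hZ] at h
    exact (integrable_map_measure ((measurable_id'.pow_const n).aestronglyMeasurable)
      hZm.aemeasurable).mp h
  have hiZ' : ∀ n : ℕ, Integrable (fun ω => Z' ω ^ n) ℙ := by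
    intro n
    have h := gauss_int_pow' n
    rw [← hZ'] at h
    exact (integrable_map_measure ((measurable_id'.pow_const n).aestronglyMeasurable)
      hZ'm.aemeasurable).mp h
  have hMZ : ∀ n : ℕ, (∫ ω, Z ω ^ n ∂ℙ) = ∫ x, x ^ n ∂(gaussianReal 0 1) := by
    intro n
    rw [← hZ, integral_map hZm.aemeasurable ((measurable_id'.pow_const n).aestronglyMeasurable)]
  have hMZ' : ∀ n : ℕ, (∫ ω, Z' ω ^ n ∂ℙ) = ∫ x, x ^ n ∂(gaussianReal 0 1) := by
    intro n
    rw [← hZ', integral_map hZ'm.aemeasurable ((measurable_id'.pow_const n).aestronglyMeasurable)]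
  have hprod : ∀ i j : ℕ, Integrable (fun ω => Z ω ^ i * Z' ω ^ j) ℙ := by
    intro i j
    exact (hindep.comp (measurable_id'.pow_const i)
      (measurable_id'.pow_const j)).integrable_mul (hiZ i) (hiZ' j)
  have hEP : ∀ i j : ℕ, (∫ ω, Z ω ^ i * Z' ω ^ j ∂ℙ)
      = (∫ x : ℝ, x ^ i ∂(gaussianReal 0 1)) * (∫ x : ℝ, x ^ j ∂(gaussianReal 0 1)) := by
    intro i j
    have h := (hindep.comp (measurable_id'.pow_const i)
      (measurable_id'.pow_const j)).integral_mul_eq_mul_integral (hiZ i).aestronglyMeasurable (hiZ' j).aestronglyMeasurable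
    have h' : (∫ ω, Z ω ^ i * Z' ω ^ j ∂ℙ) = (∫ ω, Z ω ^ i ∂ℙ) * (∫ ω, Z' ω ^ j ∂ℙ) := h
    rw [h', hMZ i, hMZ' j]
  set s := Real.sqrt (1 - ρxy ^ 2) with hs_def
  set S1 := Real.sqrt (ρx * k) with hS1_def
  set S2 := Real.sqrt (ρy * k) with hS2_def
  set S3 := Real.sqrt (ρx * ρy) with hS3_def
  have hs0 : s ^ 2 = 1 - ρxy ^ 2 := by rw [hs_def]; exact Real.sq_sqrt (by linarith)
  have hS1sq : S1 ^ 2 = ρx * k := by rw [hS1_def]; exact Real.sq_sqrt (mul_nonneg hρx0 hk.le)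
  have hS2sq : S2 ^ 2 = ρy * k := by rw [hS2_def]; exact Real.sq_sqrt (mul_nonneg hρy0 hk.le)
  have hS3sq : S3 ^ 2 = ρx * ρy := by rw [hS3_def]; exact Real.sq_sqrt (mul_nonneg hρx0 hρy0)
  have h12 : S1 * S2 = S3 * k := by
    rw [hS1_def, hS2_def, hS3_def, ← Real.sqrt_mul (mul_nonneg hρx0 hk.le),
      show ρx * k * (ρy * k) = ρx * ρy * k ^ 2 by ring,
      Real.sqrt_mul (mul_nonneg hρx0 hρy0), Real.sqrt_sq hk.le]
  set p := bx * ρx * k with hp_def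
  set q := byy * ρy * k with hq_def
  set r := dd * S3 * k with hr_def
  set u := cx * S1 with hu_def
  set v := cy * S2 with hv_def
  set e0 := 1 - p - q with he0_def
  set e2x := p + q * ρxy ^ 2 + r * ρxy with he2x_def
  set e2m := 2 * q * ρxy * s + r * s with he2m_def
  set e2w := q * s ^ 2 with he2w_def
  set f1 := u + v * ρxy with hf1_def
  set f2 := v * s with hf2_def
  have hCfun : ∀ ω, ‖C ω‖ ^ 2 * (1 - (ax + ay) * k) ^ 2 =
      e0 ^ 2 * (Z ω ^ 0 * Z' ω ^ 0) + (2 * e0 * e2x + f1 ^ 2) * (Z ω ^ 2 * Z' ω ^ 0) + (2 * e0 * e2m + 2 * f1 * f2) * (Z ω ^ 1 * Z' ω ^ 1) + (2 * e0 * e2w + f2 ^ 2) * (Z ω ^ 0 * Z' ω ^ 2) + e2x ^ 2 * (Z ω ^ 4 * Z' ω ^ 0) + (2 * e2x * e2m) * (Z ω ^ 3 * Z' ω ^ 1) + (e2m ^ 2 + 2 * e2x * e2w) * (Z ω ^ 2 * Z' ω ^ 2) + (2 * e2m * e2w) * (Z ω ^ 1 * Z' ω ^ 3) + e2w ^ 2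 * (Z ω ^ 0 * Z' ω ^ 4) := by
    intro ω
    rw [hC ω, norm_div, Complex.norm_real, Real.norm_of_nonneg hD.le, div_pow,
      div_mul_cancel₀ _ (pow_ne_zero 2 (ne_of_gt hD)), Complex.sq_norm, Complex.normSq_apply]
    simp only [Complex.add_re, Complex.add_im, Complex.sub_re, Complex.sub_im,
      Complex.mul_re, Complex.mul_im, Complex.I_re, Complex.I_im,
      Complex.ofReal_re, Complex.ofReal_im, Complex.one_re, Complex.one_im]
    rw [hZt ω]
    simp only [he0_def, he2x_def, he2m_def, he2w_def, hf1_def, hf2_def,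
      hu_def, hv_def, hp_def, hq_def, hr_def]
    ring
  rw [← integral_mul_const]
  simp only [hCfun]
  have I1 : Integrable (fun ω => e0 ^ 2 * (Z ω ^ 0 * Z' ω ^ 0)) ℙ := (hprod 0 0).const_mul _
  have I2 : Integrable (fun ω => (2 * e0 * e2x + f1 ^ 2) * (Z ω ^ 2 * Z' ω ^ 0)) ℙ := (hprod 2 0).const_mul _
  have I3 : Integrable (fun ω => (2 * e0 * e2m + 2 * f1 * f2) * (Z ω ^ 1 * Z' ω ^ 1)) ℙ := (hprod 1 1).const_mul _
  have I4 : Integrable (fun ω => (2 * e0 * e2w + f2 ^ 2) * (Z ω ^ 0 * Z' ω ^ 2)) ℙ := (hprod 0 2).const_mul _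
  have I5 : Integrable (fun ω => e2x ^ 2 * (Z ω ^ 4 * Z' ω ^ 0)) ℙ := (hprod 4 0).const_mul _
  have I6 : Integrable (fun ω => (2 * e2x * e2m) * (Z ω ^ 3 * Z' ω ^ 1)) ℙ := (hprod 3 1).const_mul _
  have I7 : Integrable (fun ω => (e2m ^ 2 + 2 * e2x * e2w) * (Z ω ^ 2 * Z' ω ^ 2)) ℙ := (hprod 2 2).const_mul _
  have I8 : Integrable (fun ω => (2 * e2m * e2w) * (Z ω ^ 1 * Z' ω ^ 3)) ℙ := (hprod 1 3).const_mul _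
  have I9 : Integrable (fun ω => e2w ^ 2 * (Z ω ^ 0 * Z' ω ^ 4)) ℙ := (hprod 0 4).const_mul _
  have K2 : Integrable (fun ω => e0 ^ 2 * (Z ω ^ 0 * Z' ω ^ 0) + (2 * e0 * e2x + f1 ^ 2) * (Z ω ^ 2 * Z' ω ^ 0)) ℙ := I1.add I2
  have K3 : Integrable (fun ω => e0 ^ 2 * (Z ω ^ 0 * Z' ω ^ 0) + (2 * e0 * e2x + f1 ^ 2) * (Z ω ^ 2 * Z' ω ^ 0) + (2 * e0 * e2m + 2 * f1 * f2) * (Z ω ^ 1 * Z' ω ^ 1)) ℙ := K2.add I3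
  have K4 : Integrable (fun ω => e0 ^ 2 * (Z ω ^ 0 * Z' ω ^ 0) + (2 * e0 * e2x + f1 ^ 2) * (Z ω ^ 2 * Z' ω ^ 0) + (2 * e0 * e2m + 2 * f1 * f2) * (Z ω ^ 1 * Z' ω ^ 1) + (2 * e0 * e2w + f2 ^ 2) * (Z ω ^ 0 * Z' ω ^ 2)) ℙ := K3.add I4
  have K5 : Integrable (fun ω => e0 ^ 2 * (Z ω ^ 0 * Z' ω ^ 0) + (2 * e0 * e2x + f1 ^ 2) * (Z ω ^ 2 * Z' ω ^ 0) + (2 * e0 * e2m + 2 * f1 * f2) * (Z ω ^ 1 * Z' ω ^ 1) + (2 * e0 * e2w + f2 ^ 2) * (Z ω ^ 0 * Z' ω ^ 2) + e2x ^ 2 * (Z ω ^ 4 * Z' ω ^ 0)) ℙ := K4.add I5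
  have K6 : Integrable (fun ω => e0 ^ 2 * (Z ω ^ 0 * Z' ω ^ 0) + (2 * e0 * e2x + f1 ^ 2) * (Z ω ^ 2 * Z' ω ^ 0) + (2 * e0 * e2m + 2 * f1 * f2) * (Z ω ^ 1 * Z' ω ^ 1) + (2 * e0 * e2w + f2 ^ 2) * (Z ω ^ 0 * Z' ω ^ 2) + e2x ^ 2 * (Z ω ^ 4 * Z' ω ^ 0) + (2 * e2x * e2m) * (Z ω ^ 3 * Z' ω ^ 1)) ℙ := K5.add I6
  have K7 : Integrable (fun ω => e0 ^ 2 * (Z ω ^ 0 * Z' ω ^ 0) + (2 * e0 * e2x + f1 ^ 2) * (Z ω ^ 2 * Z' ω ^ 0) + (2 * e0 * e2m + 2 * f1 * f2) * (Z ω ^ 1 * Z' ω ^ 1) + (2 * e0 * e2w + f2 ^ 2) * (Z ω ^ 0 * Z' ω ^ 2) + e2x ^ 2 * (Z ω ^ 4 * Z' ω ^ 0) + (2 * e2x * e2m) * (Z ω ^ 3 * Z' ω ^ 1) + (e2m ^ 2 + 2 * e2x * e2w) * (Z ω ^ 2 * Z' ω ^ 2)) ℙ := K6.add I7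
  have K8 : Integrable (fun ω => e0 ^ 2 * (Z ω ^ 0 * Z' ω ^ 0) + (2 * e0 * e2x + f1 ^ 2) * (Z ω ^ 2 * Z' ω ^ 0) + (2 * e0 * e2m + 2 * f1 * f2) * (Z ω ^ 1 * Z' ω ^ 1) + (2 * e0 * e2w + f2 ^ 2) * (Z ω ^ 0 * Z' ω ^ 2) + e2x ^ 2 * (Z ω ^ 4 * Z' ω ^ 0) + (2 * e2x * e2m) * (Z ω ^ 3 * Z' ω ^ 1) + (e2m ^ 2 + 2 * e2x * e2w) * (Z ω ^ 2 * Z' ω ^ 2) + (2 * e2m * e2w) * (Z ω ^ 1 * Z' ω ^ 3)) ℙ := K7.add I8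
  rw [integral_add K8 I9, integral_add K7 I8, integral_add K6 I7, integral_add K5 I6, integral_add K4 I5, integral_add K3 I4, integral_add K2 I3, integral_add I1 I2]
  simp only [integral_const_mul, hEP, gmom0, gmom1, gmom2, gmom3, gmom4]
  simp only [he0_def, he2x_def, he2m_def, he2w_def, hf1_def, hf2_def,
    hp_def, hq_def, hr_def, hu_def, hv_def]
  linear_combination cx ^ 2 * hS1sq + (ρxy ^ 2 * cy ^ 2 + s ^ 2 * cy ^ 2) * hS2sq
    + (2 * ρxy * cx * cy) * h12
    + (3 * ρxy ^ 2 * k ^ 2 * dd ^ 2 + s ^ 2 * k ^ 2 * dd ^ 2) * hS3sq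
    + (k * ρy * cy ^ 2 + 2 * k * ρy * byy + k ^ 2 * ρy ^ 2 * byy ^ 2
       + k ^ 2 * ρx * ρy * dd ^ 2 + 3 * ρxy ^ 2 * k ^ 2 * ρy ^ 2 * byy ^ 2
       + 6 * S3 * ρxy * k ^ 2 * ρy * byy * dd
       + 3 * s ^ 2 * k ^ 2 * ρy ^ 2 * byy ^ 2) * hs0
end

section
/- (Middle wave region estimate for the exact Fourier-mode solution.) Fix T > 0 and p ∈ (0,1/2). For every r > 0 there exists C > 0 such that for all h_x, h_y ∈ (0,1) and all integers N ≥ 1: E[ | ∬_{Ω_mid¹} X(T,ξ,η) dξ dη |² ] ≤ C·h_y^r, where Ω_mid¹ = {(ξ,η) ∈ ℝ² : |ξ| ≤ h_x^{−p} and h_y^{−p} ≤ |η| ≤ π/h_y}. -/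
open MeasureTheory ProbabilityTheory Real

/-- Super-polynomial decay of `exp (-(b * y ^ (-q)))` as `y → 0⁺`. -/
lemma aux_exp_rpow_bound (b q r : ℝ) (hb : 0 < b) (hq : 0 < q) (hr : 0 < r) :
    ∃ C : ℝ, 0 < C ∧ ∀ y : ℝ, 0 < y → y < 1 →
      Real.exp (-(b * y ^ (-q))) ≤ C * y ^ r := by
  set m : ℕ := ⌈r / q⌉₊ with hm
  have hm1 : 1 ≤ m := Nat.one_le_ceil_iff.2 (by positivity)
  refine ⟨(m.factorial : ℝ) / b ^ m, by positivity, fun y hy0 hy1 => ?_⟩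
  have hyq : 0 < y ^ (-q) := Real.rpow_pos_of_pos hy0 _
  set x : ℝ := b * y ^ (-q) with hx
  have hx0 : 0 < x := by positivity
  have hpow : x ^ m / m.factorial ≤ Real.exp x :=
    Real.pow_div_factorial_le_exp x hx0.le m
  have hxm : 0 < x ^ m / (m.factorial : ℝ) := by positivity
  have hinv : Real.exp (-x) ≤ (m.factorial : ℝ) / x ^ m := by
    rw [Real.exp_neg]
    calc (Real.exp x)⁻¹ ≤ (x ^ m / (m.factorial : ℝ))⁻¹ :=
          inv_anti₀ hxm hpow
      _ = (m.factorial : ℝ) / x ^ m := by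
          rw [inv_div]
  have hxmval : x ^ m = b ^ m * y ^ (-(q * m)) := by
    rw [hx, mul_pow, ← Real.rpow_natCast (y ^ (-q)) m, ← Real.rpow_mul hy0.le]
    ring_nf
  have hstep : (m.factorial : ℝ) / x ^ m = ((m.factorial : ℝ) / b ^ m) * y ^ (q * m) := by
    rw [hxmval, Real.rpow_neg hy0.le]
    field_simp
  have hle2 : y ^ (q * m) ≤ y ^ r := by
    apply Real.rpow_le_rpow_of_exponent_ge hy0 hy1.le
    have : r / q ≤ (m : ℝ) := Nat.le_ceil _
    calc r = q * (r / q) := by field_simp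
      _ ≤ q * m := by nlinarith
  calc Real.exp (-x) ≤ (m.factorial : ℝ) / x ^ m := hinv
    _ = ((m.factorial : ℝ) / b ^ m) * y ^ (q * m) := hstep
    _ ≤ ((m.factorial : ℝ) / b ^ m) * y ^ r := by
        apply mul_le_mul_of_nonneg_left hle2 (by positivity)

/-- Middle wave region estimate for the exact Fourier-mode solution:
`E[|∬_{Ω_mid¹} X(T,ξ,η) dξ dη|²] ≤ C h_y^r`. -/
theorem middle_wave_region_estimate_exact
    (ρx ρy ρxy T p : ℝ)
    (hρx0 : 0 ≤ ρx) (hρx1 : ρx < 1) (hρy0 : 0 ≤ ρy) (hρy1 : ρy < 1)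
    (hρxy : |ρxy| ≤ 1) (hT : 0 < T) (hp0 : 0 < p) (hp1 : p < 1 / 2) :
    ∀ r : ℝ, 0 < r → ∃ C : ℝ, 0 < C ∧
      ∀ (hx hy : ℝ), 0 < hx → hx < 1 → 0 < hy → hy < 1 →
      ∀ (N : ℕ) (k : ℝ), 1 ≤ N → k = T / N →
      ∀ (Ω : Type) [MeasureSpace Ω] [IsProbabilityMeasure (ℙ : Measure Ω)],
      ∀ (Z Z' : Fin N → Ω → ℝ),
        (∀ n, Measurable (Z n)) → (∀ n, Measurable (Z' n)) →
        iIndepFun (Sum.elim Z Z') ℙ →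
        (∀ n, Measure.map (Z n) ℙ = gaussianReal 0 1) →
        (∀ n, Measure.map (Z' n) ℙ = gaussianReal 0 1) →
      ∀ (X : ℝ → ℝ → Ω → ℂ),
        (∀ ξ η ω, X ξ η ω = Complex.exp
          (-((1 - ρx) * ξ ^ 2 * T / 2 : ℝ) - ((1 - ρy) * η ^ 2 * T / 2 : ℝ)
            - Complex.I * (ξ * Real.sqrt (ρx * k) * ∑ n : Fin N, Z n ω : ℝ)
            - Complex.I * (η * Real.sqrt (ρy * k) *
                ∑ n : Fin N, (ρxy * Z n ω + Real.sqrt (1 - ρxy ^ 2) * Z' n ω) : ℝ))) →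
        (∫ ω, ‖(∫ q in {q : ℝ × ℝ |
            |q.1| ≤ hx ^ (-p) ∧ hy ^ (-p) ≤ |q.2| ∧ |q.2| ≤ π / hy},
            X q.1 q.2 ω)‖ ^ 2 ∂ℙ)
          ≤ C * hy ^ r := by
  intro r hr
  set a : ℝ := (1 - ρx) * T / 2 with ha_def
  set b : ℝ := (1 - ρy) * T / 2 with hb_def
  have ha : 0 < a := by rw [ha_def]; nlinarith
  have hb : 0 < b := by rw [hb_def]; nlinarith
  obtain ⟨C0, hC0, hC0le⟩ := aux_exp_rpow_bound b (2 * p) r hb (by positivity) hr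
  -- integrable dominating Gaussians on ℝ²
  have hint1 : Integrable (fun x : ℝ => Real.exp (-a * x ^ 2)) :=
    integrable_exp_neg_mul_sq ha
  have hint2 : Integrable (fun x : ℝ => Real.exp (-(b / 2) * x ^ 2)) :=
    integrable_exp_neg_mul_sq (by positivity)
  have hh : Integrable (fun q : ℝ × ℝ =>
      Real.exp (-a * q.1 ^ 2) * Real.exp (-(b / 2) * q.2 ^ 2)) := by
    rw [MeasureTheory.Measure.volume_eq_prod]
    exact hint1.mul_prod hint2
  set M : ℝ := ∫ q : ℝ × ℝ, Real.exp (-a * q.1 ^ 2) * Real.exp (-(b / 2) * q.2 ^ 2) with hM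
  have hM0 : 0 ≤ M := integral_nonneg fun q => by positivity
  refine ⟨C0 * (M ^ 2 + 1), by positivity, ?_⟩
  intro hx hy hhx0 hhx1 hhy0 hhy1 N k hN hk Ω _ _ Z Z' hZm hZ'm hindep hZg hZ'g X hX
  set S : Set (ℝ × ℝ) :=
    {q : ℝ × ℝ | |q.1| ≤ hx ^ (-p) ∧ hy ^ (-p) ≤ |q.2| ∧ |q.2| ≤ π / hy} with hS
  have hSmeas : MeasurableSet S := by
    apply MeasurableSet.inter
    · exact measurableSet_le (measurable_fst.abs) measurable_const
    · exact MeasurableSet.inter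
        (measurableSet_le measurable_const (measurable_snd.abs))
        (measurableSet_le (measurable_snd.abs) measurable_const)
  -- pointwise norm of X
  have hnorm : ∀ ξ η ω, ‖X ξ η ω‖ =
      Real.exp (-a * ξ ^ 2) * Real.exp (-b * η ^ 2) := by
    intro ξ η ω
    rw [hX, Complex.norm_exp, ← Real.exp_add]
    congr 1
    simp [Complex.sub_re, Complex.mul_re, ha_def, hb_def, ← Complex.ofReal_pow]
    ring
  -- the constant from the η-decay
  set e : ℝ := Real.exp (-(b / 2 * hy ^ (-(2 * p)))) with he
  have he0 : 0 ≤ e := Real.exp_nonneg _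
  -- bound the set integral of the norm
  have hgbound : ∀ q ∈ S,
      Real.exp (-a * q.1 ^ 2) * Real.exp (-b * q.2 ^ 2) ≤
        e * (Real.exp (-a * q.1 ^ 2) * Real.exp (-(b / 2) * q.2 ^ 2)) := by
    intro q hq
    obtain ⟨-, hq2, -⟩ := hq
    have hq2sq : hy ^ (-(2 * p)) ≤ q.2 ^ 2 := by
      have h1 : (hy ^ (-p)) ^ 2 ≤ |q.2| ^ 2 := by
        apply pow_le_pow_left₀ (Real.rpow_nonneg hhy0.le _) hq2
      rw [sq_abs] at h1
      calc hy ^ (-(2 * p)) = (hy ^ (-p)) ^ 2 := by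
            rw [← Real.rpow_natCast (hy ^ (-p)) 2, ← Real.rpow_mul hhy0.le]
            norm_num; ring_nf
        _ ≤ q.2 ^ 2 := h1
    have : Real.exp (-b * q.2 ^ 2) = Real.exp (-(b / 2) * q.2 ^ 2) *
        Real.exp (-(b / 2) * q.2 ^ 2) := by
      rw [← Real.exp_add]; ring_nf
    rw [this]
    have h2 : Real.exp (-(b / 2) * q.2 ^ 2) ≤ e := by
      rw [he, Real.exp_le_exp]
      nlinarith
    calc Real.exp (-a * q.1 ^ 2) * (Real.exp (-(b / 2) * q.2 ^ 2) *
          Real.exp (-(b / 2) * q.2 ^ 2))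
        ≤ Real.exp (-a * q.1 ^ 2) * (e * Real.exp (-(b / 2) * q.2 ^ 2)) := by
          apply mul_le_mul_of_nonneg_left _ (Real.exp_nonneg _)
          exact mul_le_mul_of_nonneg_right h2 (Real.exp_nonneg _)
      _ = e * (Real.exp (-a * q.1 ^ 2) * Real.exp (-(b / 2) * q.2 ^ 2)) := by ring
  have hg : Integrable (fun q : ℝ × ℝ =>
      Real.exp (-a * q.1 ^ 2) * Real.exp (-b * q.2 ^ 2)) := by
    rw [MeasureTheory.Measure.volume_eq_prod]
    exact hint1.mul_prod (integrable_exp_neg_mul_sq hb)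
  have hIle : (∫ q in S, Real.exp (-a * q.1 ^ 2) * Real.exp (-b * q.2 ^ 2)) ≤ e * M := by
    calc (∫ q in S, Real.exp (-a * q.1 ^ 2) * Real.exp (-b * q.2 ^ 2))
        ≤ ∫ q in S, e * (Real.exp (-a * q.1 ^ 2) * Real.exp (-(b / 2) * q.2 ^ 2)) := by
          apply setIntegral_mono_on hg.integrableOn (hh.const_mul e).integrableOn hSmeas
          exact hgbound
      _ = e * ∫ q in S, Real.exp (-a * q.1 ^ 2) * Real.exp (-(b / 2) * q.2 ^ 2) := by
          rw [MeasureTheory.integral_const_mul]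
      _ ≤ e * M := by
          apply mul_le_mul_of_nonneg_left _ he0
          apply setIntegral_le_integral hh
          filter_upwards with q using by positivity
  have hI0 : 0 ≤ ∫ q in S, Real.exp (-a * q.1 ^ 2) * Real.exp (-b * q.2 ^ 2) :=
    integral_nonneg fun q => by positivity
  -- pointwise bound on the inner integral
  have hpt : ∀ ω, ‖∫ q in S, X q.1 q.2 ω‖ ^ 2 ≤ (e * M) ^ 2 := by
    intro ω
    have h1 : ‖∫ q in S, X q.1 q.2 ω‖ ≤ e * M := by
      calc ‖∫ q in S, X q.1 q.2 ω‖ = ‖∫ q in S, X q.1 q.2 ω‖ := rfl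
        _ ≤ ∫ q in S, ‖X q.1 q.2 ω‖ := norm_integral_le_integral_norm _
        _ = ∫ q in S, Real.exp (-a * q.1 ^ 2) * Real.exp (-b * q.2 ^ 2) := by
            apply setIntegral_congr_fun hSmeas
            intro q _
            exact hnorm q.1 q.2 ω
        _ ≤ e * M := hIle
    exact pow_le_pow_left₀ (norm_nonneg _) h1 2
  -- integrate over ω
  have hfinal : (∫ ω, ‖∫ q in S, X q.1 q.2 ω‖ ^ 2 ∂ℙ) ≤ (e * M) ^ 2 := by
    calc (∫ ω, ‖∫ q in S, X q.1 q.2 ω‖ ^ 2 ∂ℙ)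
        ≤ ∫ _ : Ω, (e * M) ^ 2 ∂ℙ := by
          apply integral_mono_of_nonneg
          · filter_upwards with ω using sq_nonneg _
          · exact integrable_const _
          · filter_upwards with ω using hpt ω
      _ = (e * M) ^ 2 := by simp
  refine hfinal.trans ?_
  have hesq : (e * M) ^ 2 = Real.exp (-(b * hy ^ (-(2 * p)))) * M ^ 2 := by
    rw [he, mul_pow, ← Real.exp_nat_mul]
    ring_nf
  rw [hesq]
  calc Real.exp (-(b * hy ^ (-(2 * p)))) * M ^ 2
      ≤ C0 * hy ^ r * M ^ 2 := by
        apply mul_le_mul_of_nonneg_right (hC0le hy hhy0 hhy1) (sq_nonneg _)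
    _ ≤ C0 * (M ^ 2 + 1) * hy ^ r := by
        have h1 : 0 ≤ hy ^ r := Real.rpow_nonneg hhy0.le _
        nlinarith [sq_nonneg M, hC0.le]
end

section
/- (Abstract two-dimensional combination-technique convergence.) Let E be a real normed vector space, P ∈ E, and Q : ℕ₀ × ℕ₀ → E. Assume (i) ‖ΔQ(l₁,l₂)‖ ≤ C₁·4^{−(l₁+l₂)} for all (l₁,l₂) ∈ ℕ₀² and some constant C₁ > 0, and (ii) Q(m,m) → P in E as m → ∞. Then for every integer L ≥ 0: ‖ ∑_{(l₁,l₂) ∈ ℕ₀², l₁+l₂ ≤ L+1} ΔQ(l₁,l₂) − P ‖ ≤ C₁ · ((3L+10)/9) · 4^{−(L+1)}. -/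
open Finset Filter

lemma geom_aux : ∀ n : ℕ, ∑ k ∈ Finset.range n, ((k : ℝ) + 1) * ((4 : ℝ) ^ k)⁻¹
    = (16 - (12 * (n : ℝ) + 16) * ((4 : ℝ) ^ n)⁻¹) / 9 := by
  intro n
  induction n with
  | zero => norm_num
  | succ n ih =>
    rw [Finset.sum_range_succ, ih]
    have h4 : ((4 : ℝ) ^ n) ≠ 0 := by positivity
    push_cast
    field_simp
    ring

lemma triangle_eq (L : ℕ) :
    Finset.filter (fun q : ℕ × ℕ => q.1 + q.2 ≤ L + 1)
      (Finset.range (L + 2) ×ˢ Finset.range (L + 2))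
    = (Finset.range (L + 2)).biUnion (fun k => Finset.HasAntidiagonal.antidiagonal k) := by
  ext ⟨a, b⟩
  simp only [Finset.mem_filter, Finset.mem_product, Finset.mem_range,
    Finset.mem_biUnion, Finset.HasAntidiagonal.mem_antidiagonal]
  constructor
  · rintro ⟨⟨_, _⟩, h⟩; exact ⟨a + b, by omega, rfl⟩
  · rintro ⟨k, hk, h⟩; omega

/-- Abstract two-dimensional combination-technique convergence. -/
theorem combination_technique_convergence_two_dim
    (E : Type*) [NormedAddCommGroup E] [NormedSpace ℝ E]
    (P : E) (Q : ℕ → ℕ → E) (DQ : ℕ → ℕ → E)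
    (hDQ : ∀ l₁ l₂, DQ l₁ l₂ =
      Q l₁ l₂ - (if 0 < l₁ then Q (l₁ - 1) l₂ else 0)
        - (if 0 < l₂ then Q l₁ (l₂ - 1) else 0)
        + (if 0 < l₁ ∧ 0 < l₂ then Q (l₁ - 1) (l₂ - 1) else 0))
    (C₁ : ℝ) (hC₁ : 0 < C₁)
    (hbound : ∀ l₁ l₂ : ℕ, ‖DQ l₁ l₂‖ ≤ C₁ * ((4 : ℝ) ^ (l₁ + l₂))⁻¹)
    (hconv : Filter.Tendsto (fun m => Q m m) Filter.atTop (nhds P)) :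
    ∀ L : ℕ,
      ‖(∑ q ∈ Finset.filter (fun q => q.1 + q.2 ≤ L + 1)
          (Finset.range (L + 2) ×ˢ Finset.range (L + 2)), DQ q.1 q.2) - P‖ ≤
        C₁ * ((3 * (L : ℝ) + 10) / 9) * ((4 : ℝ) ^ (L + 1))⁻¹ := by
  -- the majorant
  set g : ℕ × ℕ → ℝ := fun p => C₁ * ((4 : ℝ) ^ (p.1 + p.2))⁻¹ with hg_def
  have hg_eq : ∀ p : ℕ × ℕ, g p = C₁ * (((4 : ℝ)⁻¹) ^ p.1 * ((4 : ℝ)⁻¹) ^ p.2) := by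
    intro p; simp only [hg_def]; rw [pow_add, mul_inv, ← inv_pow, ← inv_pow]
  have hgeo : Summable (fun n : ℕ => ((4 : ℝ)⁻¹) ^ n) :=
    summable_geometric_of_lt_one (by norm_num) (by norm_num)
  have hgeo2 : Summable (fun p : ℕ × ℕ => ((4 : ℝ)⁻¹) ^ p.1 * ((4 : ℝ)⁻¹) ^ p.2) :=
    hgeo.mul_of_nonneg hgeo (fun n => by positivity) (fun n => by positivity)
  have hg_sum : Summable g :=
    (hgeo2.mul_left C₁).congr (fun p => (hg_eq p).symm)
  -- total sum of the majorant
  have hg_tsum : ∑' p : ℕ × ℕ, g p = C₁ * (16 / 9) := by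
    have h1 : ∑' n : ℕ, ((4 : ℝ)⁻¹) ^ n = (1 - (4 : ℝ)⁻¹)⁻¹ :=
      tsum_geometric_of_lt_one (by norm_num) (by norm_num)
    have h2 : ((∑' n : ℕ, ((4 : ℝ)⁻¹) ^ n) * ∑' n : ℕ, ((4 : ℝ)⁻¹) ^ n)
        = ∑' p : ℕ × ℕ, ((4 : ℝ)⁻¹) ^ p.1 * ((4 : ℝ)⁻¹) ^ p.2 :=
      Summable.tsum_mul_tsum hgeo hgeo hgeo2
    calc ∑' p : ℕ × ℕ, g p
        = C₁ * ∑' p : ℕ × ℕ, ((4 : ℝ)⁻¹) ^ p.1 * ((4 : ℝ)⁻¹) ^ p.2 := by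
          rw [← tsum_mul_left]; exact tsum_congr hg_eq
      _ = C₁ * (16 / 9) := by rw [← h2, h1]; norm_num
  set f : ℕ × ℕ → E := fun p => DQ p.1 p.2 with hf_def
  -- telescoping: partial sums over squares
  set R : ℕ → ℕ → E := fun i j => if 0 < i ∧ 0 < j then Q (i - 1) (j - 1) else 0 with hR_def
  have hstep : ∀ i j, DQ i j =
      (R (i + 1) (j + 1) - R i (j + 1)) - (R (i + 1) j - R i j) := by
    intro i j
    rw [hDQ]
    simp only [hR_def, Nat.succ_sub_one, Nat.succ_pos, true_and, and_true]
    rcases Nat.eq_zero_or_pos i with hi | hi <;> rcases Nat.eq_zero_or_pos j with hj | hj <;>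
      simp [hi, hj, Nat.pos_iff_ne_zero] <;> abel
  have hsq : ∀ m n : ℕ, ∑ p ∈ Finset.range m ×ˢ Finset.range n, f p = R m n := by
    intro m n
    rw [Finset.sum_product]
    have hrow : ∀ i, ∑ j ∈ Finset.range n, DQ i j = R (i + 1) n - R i n := by
      intro i
      calc ∑ j ∈ Finset.range n, DQ i j
          = ∑ j ∈ Finset.range n,
              ((fun j => R (i + 1) j - R i j) (j + 1) - (fun j => R (i + 1) j - R i j) j) :=
            Finset.sum_congr rfl (fun j _ => by rw [hstep])
        _ = (R (i + 1) n - R i n) - (R (i + 1) 0 - R i 0) :=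
            Finset.sum_range_sub (fun j => R (i + 1) j - R i j) n
        _ = R (i + 1) n - R i n := by simp [hR_def]
    calc ∑ i ∈ Finset.range m, ∑ j ∈ Finset.range n, f (i, j)
        = ∑ i ∈ Finset.range m, ((fun i => R i n) (i + 1) - (fun i => R i n) i) :=
          Finset.sum_congr rfl (fun i _ => hrow i)
      _ = R m n - R 0 n := Finset.sum_range_sub (fun i => R i n) m
      _ = R m n := by simp [hR_def]
  -- f has sum P
  have hcauchy : CauchySeq (fun s : Finset (ℕ × ℕ) => ∑ p ∈ s, f p) :=
    cauchySeq_finset_of_norm_bounded hg_sum (fun p => hbound p.1 p.2)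
  have hmono : Monotone (fun m : ℕ => Finset.range (m + 1) ×ˢ Finset.range (m + 1)) := by
    intro a b hab
    exact Finset.product_subset_product (Finset.range_subset_range.2 (by omega))
      (Finset.range_subset_range.2 (by omega))
  have hcof : ∀ p : ℕ × ℕ, ∃ m, p ∈ Finset.range (m + 1) ×ˢ Finset.range (m + 1) := by
    intro p
    refine ⟨p.1 + p.2, ?_⟩
    simp only [Finset.mem_product, Finset.mem_range]
    omega
  have hten : Tendsto (fun m : ℕ => Finset.range (m + 1) ×ˢ Finset.range (m + 1))
      atTop atTop := tendsto_atTop_finset_of_monotone hmono hcof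
  have hcomp : Tendsto ((fun s : Finset (ℕ × ℕ) => ∑ p ∈ s, f p) ∘
      (fun m : ℕ => Finset.range (m + 1) ×ˢ Finset.range (m + 1))) atTop (nhds P) := by
    have h2 : ((fun s : Finset (ℕ × ℕ) => ∑ p ∈ s, f p) ∘
        (fun m : ℕ => Finset.range (m + 1) ×ˢ Finset.range (m + 1)))
        = fun m => Q m m := by
      funext m
      simp only [Function.comp_apply]
      rw [hsq]
      simp [hR_def]
    rw [h2]
    exact hconv
  have hP : HasSum f P := tendsto_nhds_of_cauchySeq_of_subseq hcauchy hten hcomp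
  have hf_sum : Summable f := ⟨P, hP⟩
  have htsum : ∑' p, f p = P := hP.tsum_eq
  intro L
  set T : Finset (ℕ × ℕ) := Finset.filter (fun q : ℕ × ℕ => q.1 + q.2 ≤ L + 1)
      (Finset.range (L + 2) ×ˢ Finset.range (L + 2)) with hT_def
  -- decompose the tsum of f
  have hkey : (∑ q ∈ T, f q) + ∑' x : ↑((T : Set (ℕ × ℕ))ᶜ), f x = P := by
    rw [← htsum]; exact Summable.sum_add_tsum_compl hf_sum
  have hdiff : (∑ q ∈ T, f q) - P = -∑' x : ↑((T : Set (ℕ × ℕ))ᶜ), f x := by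
    rw [← hkey]; abel
  -- triangle sum of the majorant
  have hTg : ∑ q ∈ T, g q
      = C₁ * ((16 - (12 * ((L : ℝ) + 2) + 16) * ((4 : ℝ) ^ (L + 2))⁻¹) / 9) := by
    rw [hT_def, triangle_eq]
    rw [Finset.sum_biUnion]
    · have hinner : ∀ k : ℕ, ∑ p ∈ Finset.HasAntidiagonal.antidiagonal k, g p
          = ((k : ℝ) + 1) * (C₁ * ((4 : ℝ) ^ k)⁻¹) := by
        intro k
        have hc : ∀ p ∈ Finset.HasAntidiagonal.antidiagonal k, g p = C₁ * ((4 : ℝ) ^ k)⁻¹ := by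
          intro p hp
          rw [Finset.HasAntidiagonal.mem_antidiagonal] at hp
          simp [hg_def, hp]
        rw [Finset.sum_congr rfl hc, Finset.sum_const, Finset.Nat.card_antidiagonal]
        push_cast
        ring
      rw [Finset.sum_congr rfl (fun k _ => hinner k)]
      calc ∑ k ∈ Finset.range (L + 2), ((k : ℝ) + 1) * (C₁ * ((4 : ℝ) ^ k)⁻¹)
          = C₁ * ∑ k ∈ Finset.range (L + 2), ((k : ℝ) + 1) * ((4 : ℝ) ^ k)⁻¹ := by
            rw [Finset.mul_sum]; exact Finset.sum_congr rfl (fun k _ => by ring)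
        _ = _ := by rw [geom_aux]; push_cast; ring_nf
    · intro a _ b _ hab
      simp only [Function.onFun]
      refine Finset.disjoint_left.2 ?_
      intro p hpa hpb
      rw [Finset.HasAntidiagonal.mem_antidiagonal] at hpa hpb
      exact hab (hpa.symm.trans hpb)
  -- tail of the majorant
  have hgkey : (∑ q ∈ T, g q) + ∑' x : ↑((T : Set (ℕ × ℕ))ᶜ), g x = C₁ * (16 / 9) := by
    rw [← hg_tsum]; exact Summable.sum_add_tsum_compl hg_sum
  have htail : ∑' x : ↑((T : Set (ℕ × ℕ))ᶜ), g x
      = C₁ * ((3 * (L : ℝ) + 10) / 9) * ((4 : ℝ) ^ (L + 1))⁻¹ := by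
    have h4 : ((4 : ℝ) ^ (L + 2)) ≠ 0 := by positivity
    have h4' : ((4 : ℝ) ^ (L + 1)) ≠ 0 := by positivity
    have hstep2 : ((4 : ℝ) ^ (L + 2)) = 4 * (4 : ℝ) ^ (L + 1) := by ring
    have h5 := eq_sub_of_add_eq' (hTg ▸ hgkey)
    rw [h5, hstep2]
    field_simp
    ring
  -- conclude
  rw [show (∑ q ∈ T, DQ q.1 q.2) = ∑ q ∈ T, f q from rfl, hdiff, norm_neg]
  calc ‖∑' x : ↑((T : Set (ℕ × ℕ))ᶜ), f x‖
      ≤ ∑' x : ↑((T : Set (ℕ × ℕ))ᶜ), ‖f x‖ :=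
        norm_tsum_le_tsum_norm ?_
    _ ≤ ∑' x : ↑((T : Set (ℕ × ℕ))ᶜ), g x :=
        Summable.tsum_le_tsum (fun x => hbound x.1.1 x.1.2) ?_ (hg_sum.subtype _)
    _ = C₁ * ((3 * (L : ℝ) + 10) / 9) * ((4 : ℝ) ^ (L + 1))⁻¹ := htail
  · exact (hg_sum.subtype _).of_nonneg_of_le (fun x => norm_nonneg _)
      (fun x => hbound x.1.1 x.1.2)
  · exact (hg_sum.subtype _).of_nonneg_of_le (fun x => norm_nonneg _)
      (fun x => hbound x.1.1 x.1.2)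
end

section
/- (Abstract d-dimensional combination-technique convergence.) Let d ≥ 1 be an integer, E a real normed vector space, P ∈ E, and Q : ℕ₀^d → E. Assume (i) ‖ΔQ(l)‖ ≤ C₁·4^{−(l₁+⋯+l_d)} for all l ∈ ℕ₀^d and some constant C₁ > 0, and (ii) Q(m,…,m) → P in E as m → ∞. Then there exists a constant C depending only on d such that for every integer L ≥ 1: ‖ ∑_{l ∈ ℕ₀^d, l₁+⋯+l_d ≤ L} ΔQ(l) − P ‖ ≤ C · C₁ · L^{d−1} · 4^{−L}. -/
open Finset

private lemma ctc_telescope {d : ℕ} {E : Type*} [NormedAddCommGroup E] [NormedSpace ℝ E]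
    (Q DQ : (Fin d → ℕ) → E)
    (hDQ : ∀ l, DQ l = ∑ s : Fin d → Fin 2,
      if (∀ i, (s i : ℕ) ≤ l i) then
        ((-1 : ℝ) ^ (∑ i, (s i : ℕ))) • Q (fun i => l i - (s i : ℕ))
      else 0)
    (M : ℕ) (hM : 1 ≤ M) :
    ∑ l ∈ Fintype.piFinset (fun _ : Fin d => Finset.range (M+1)), DQ l
      = Q (fun _ => M) := by
  classical
  set B := Fintype.piFinset (fun _ : Fin d => Finset.range (M+1)) with hB
  have memB : ∀ f : Fin d → ℕ, f ∈ B ↔ ∀ i, f i ≤ M := by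
    intro f
    simp [hB, Fintype.mem_piFinset, Nat.lt_succ_iff]
  simp only [hDQ]
  rw [Finset.sum_comm]
  have step1 : ∀ s : Fin d → Fin 2,
      (∑ l ∈ B,
        if (∀ i, (s i : ℕ) ≤ l i) then
          ((-1 : ℝ) ^ (∑ i, (s i : ℕ))) • Q (fun i => l i - (s i : ℕ))
        else 0)
      = ∑ m ∈ B,
          if (∀ i, m i + (s i : ℕ) ≤ M) then
            ((-1 : ℝ) ^ (∑ i, (s i : ℕ))) • Q m else 0 := by
    intro s
    rw [← Finset.sum_filter, ← Finset.sum_filter]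
    refine Finset.sum_nbij' (fun l => fun i => l i - (s i : ℕ))
      (fun m => fun i => m i + (s i : ℕ)) ?_ ?_ ?_ ?_ ?_
    · intro a ha
      simp only [Finset.mem_filter, memB] at ha ⊢
      obtain ⟨h1, h2⟩ := ha
      constructor
      · intro i; have := h1 i; omega
      · intro i; have := h1 i; have := h2 i; omega
    · intro a ha
      simp only [Finset.mem_filter, memB] at ha ⊢
      obtain ⟨h1, h2⟩ := ha
      exact ⟨fun i => by have := h2 i; omega, fun i => by omega⟩
    · intro a ha
      simp only [Finset.mem_filter, memB] at ha
      funext i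
      have h2 := ha.2 i
      simp only []
      omega
    · intro a _
      funext i
      simp only []
      omega
    · intro a _; rfl
  rw [Finset.sum_congr rfl (fun s _ => step1 s)]
  rw [Finset.sum_comm]
  have step2 : ∀ m ∈ B,
      (∑ s : Fin d → Fin 2,
        if (∀ i, m i + (s i : ℕ) ≤ M) then
          ((-1 : ℝ) ^ (∑ i, (s i : ℕ))) • Q m else 0)
      = (if m = (fun _ => M) then (1:ℝ) else 0) • Q m := by
    intro m hm
    rw [memB] at hm
    have key : (∑ s : Fin d → Fin 2,
        if (∀ i, m i + (s i : ℕ) ≤ M) then ((-1 : ℝ) ^ (∑ i, (s i : ℕ))) else 0)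
        = (if m = (fun _ => M) then (1:ℝ) else 0) := by
      have factor : ∀ s : Fin d → Fin 2,
          (if (∀ i, m i + (s i : ℕ) ≤ M) then ((-1 : ℝ) ^ (∑ i, (s i : ℕ))) else 0)
          = ∏ i, (if m i + (s i : ℕ) ≤ M then ((-1:ℝ)) ^ (s i : ℕ) else 0) := by
        intro s
        rw [Finset.prod_ite_zero]
        simp [Finset.prod_pow_eq_pow_sum]
      simp only [factor]
      have hpi : (Fintype.piFinset fun _ : Fin d => (Finset.univ : Finset (Fin 2)))
          = Finset.univ := Fintype.piFinset_univ
      rw [← hpi, ← Finset.prod_univ_sum (fun _ => (Finset.univ : Finset (Fin 2)))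
        (fun i j => if m i + (j : ℕ) ≤ M then ((-1:ℝ)) ^ (j : ℕ) else 0)]
      have percoord : ∀ i : Fin d,
          (∑ j : Fin 2, if m i + (j : ℕ) ≤ M then ((-1:ℝ)) ^ (j : ℕ) else 0)
          = if m i = M then (1:ℝ) else 0 := by
        intro i
        rw [Fin.sum_univ_two]
        have hmi := hm i
        by_cases h : m i = M
        · have h1 : ¬ (m i + 1 ≤ M) := by omega
          simp [h, h1]
        · have h1 : m i + 1 ≤ M := by omega
          simp [h, hmi, h1]
      rw [Finset.prod_congr rfl (fun i _ => percoord i), Finset.prod_ite_zero]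
      by_cases h : m = (fun _ => M)
      · simp [h]
      · rw [if_neg (fun hc => h (funext fun i => hc i (Finset.mem_univ i))), if_neg h]
    rw [← key, Finset.sum_smul]
    congr 1
    funext s
    split <;> simp
  rw [Finset.sum_congr rfl step2]
  have : ∀ m ∈ B, (if m = (fun _ => M) then (1:ℝ) else 0) • Q m
      = (if m = (fun _ => M) then Q m else 0) := by
    intro m _; split <;> simp
  rw [Finset.sum_congr rfl this, Finset.sum_ite_eq' B (fun _ => M) Q]
  rw [if_pos]
  rw [memB]
  intro i; exact le_refl M

private lemma ctc_fiber_card {e : ℕ} (s : Finset (Fin (e+1) → ℕ)) (k : ℕ) :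
    (s.filter (fun l => (∑ i, l i) = k)).card ≤ (k+1)^e := by
  classical
  have hcard : ((Fintype.piFinset (fun _ : Fin e => Finset.range (k+1))).card) = (k+1)^e := by
    simp [Fintype.card_piFinset]
  rw [← hcard]
  apply Finset.card_le_card_of_injOn (fun l => fun i : Fin e => l i.castSucc)
  · intro l hl
    simp only [Finset.mem_coe, Finset.mem_filter] at hl
    simp only [Finset.mem_coe, Fintype.mem_piFinset, Finset.mem_range, Nat.lt_succ_iff]
    intro i
    calc l i.castSucc ≤ ∑ i, l i :=
          Finset.single_le_sum (fun _ _ => Nat.zero_le _) (Finset.mem_univ _)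
      _ = k := hl.2
  · intro a ha b hb hab
    simp only [Finset.mem_coe, Finset.mem_filter] at ha hb
    have hcomp : ∀ j : Fin e, a j.castSucc = b j.castSucc := fun j => congrFun hab j
    funext i
    refine Fin.lastCases ?_ ?_ i
    · have hsa := ha.2; have hsb := hb.2
      rw [Fin.sum_univ_castSucc] at hsa hsb
      rw [Finset.sum_congr rfl (fun j _ => hcomp j)] at hsa
      omega
    · exact hcomp

private lemma ctc_simplex_eq {d L M : ℕ} (hLM : L ≤ M) {E : Type*} [AddCommMonoid E]
    (DQ : (Fin d → ℕ) → E) :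
    (∑ l : Fin d → Fin (L+1),
        if (∑ i, (l i : ℕ)) ≤ L then DQ (fun i => (l i : ℕ)) else 0)
      = ∑ l ∈ Fintype.piFinset (fun _ : Fin d => Finset.range (M+1)),
          if (∑ i, l i) ≤ L then DQ l else 0 := by
  classical
  have hsub : Fintype.piFinset (fun _ : Fin d => Finset.range (L+1))
      ⊆ Fintype.piFinset (fun _ : Fin d => Finset.range (M+1)) := by
    intro x hx
    simp only [Fintype.mem_piFinset, Finset.mem_range] at hx ⊢
    intro i; have := hx i; omega
  rw [← Finset.sum_subset hsub ?h0]
  · refine Finset.sum_nbij' (fun (l : Fin d → Fin (L+1)) => fun i => (l i : ℕ))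
      (fun m => fun i => (⟨min (m i) L, by omega⟩ : Fin (L+1))) ?_ ?_ ?_ ?_ ?_
    · intro a _
      simp only [Fintype.mem_piFinset, Finset.mem_range]
      intro i; exact (a i).isLt
    · intro a _; exact Finset.mem_univ _
    · intro a _
      funext i
      apply Fin.ext
      simp only []
      have := (a i).isLt
      omega
    · intro a ha
      simp only [Fintype.mem_piFinset, Finset.mem_range] at ha
      funext i
      have := ha i
      simp only []
      omega
    · intro a _; rfl
  · intro x hx hnx
    rw [if_neg]
    simp only [Fintype.mem_piFinset, Finset.mem_range] at hx hnx
    push_neg at hnx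
    obtain ⟨i, hi⟩ := hnx
    intro hc
    have : x i ≤ ∑ j, x j :=
      Finset.single_le_sum (fun _ _ => Nat.zero_le _) (Finset.mem_univ _)
    omega

private lemma ctc_geom_summable (e : ℕ) :
    Summable (fun j : ℕ => ((j:ℝ)+2)^e * (1/4:ℝ)^j) := by
  have hf : Summable (fun n : ℕ => (n:ℝ)^e * (1/4:ℝ)^n) :=
    summable_pow_mul_geometric_of_norm_lt_one e
      (by rw [Real.norm_eq_abs, abs_of_nonneg (by norm_num : (0:ℝ) ≤ 1/4)]; norm_num)
  have hs : Summable (fun j : ℕ => ((j+2:ℕ):ℝ)^e * (1/4:ℝ)^(j+2)) :=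
    (summable_nat_add_iff 2).mpr hf
  have := hs.mul_left (16:ℝ)
  apply this.congr
  intro j
  push_cast
  ring

private lemma ctc_tail_sum (e L : ℕ) (hL : 1 ≤ L) (N : ℕ) :
    ∑ k ∈ Finset.Icc (L+1) N, (((k:ℝ)+1)^e * ((4:ℝ)^k)⁻¹)
      ≤ (L:ℝ)^e * ((4:ℝ)^L)⁻¹ * ∑' j : ℕ, ((j:ℝ)+2)^e * (1/4:ℝ)^j := by
  set g : ℕ → ℝ := fun j => ((j:ℝ)+2)^e * (1/4:ℝ)^j with hg
  have hg_nonneg : ∀ j, 0 ≤ g j := by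
    intro j; positivity
  calc ∑ k ∈ Finset.Icc (L+1) N, (((k:ℝ)+1)^e * ((4:ℝ)^k)⁻¹)
      ≤ ∑ k ∈ Finset.Icc (L+1) N, (L:ℝ)^e * ((4:ℝ)^L)⁻¹ * g (k - L) := by
        apply Finset.sum_le_sum
        intro k hk
        rw [Finset.mem_Icc] at hk
        obtain ⟨hk1, _⟩ := hk
        obtain ⟨j, rfl⟩ : ∃ j, k = L + j := ⟨k - L, by omega⟩
        have hj : 1 ≤ j := by omega
        have hbase : ((L:ℝ) + j) + 1 ≤ (L:ℝ) * ((j:ℝ) + 2) := by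
          have h1 : (1:ℝ) ≤ (L:ℝ) := by exact_mod_cast hL
          have h2 : (1:ℝ) ≤ (j:ℝ) := by exact_mod_cast hj
          nlinarith
        have hpow : (((L:ℝ) + j) + 1)^e ≤ ((L:ℝ) * ((j:ℝ) + 2))^e := by
          apply pow_le_pow_left₀ (by positivity) hbase
        have hsimp : (L + j) - L = j := by omega
        rw [hsimp, hg]
        simp only []
        rw [pow_add, mul_inv]
        have h4 : ((4:ℝ)^j)⁻¹ = (1/4:ℝ)^j := by
          rw [one_div, inv_pow]
        push_cast
        calc ((L:ℝ) + j + 1)^e * (((4:ℝ)^L)⁻¹ * ((4:ℝ)^j)⁻¹)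
            ≤ ((L:ℝ) * ((j:ℝ) + 2))^e * (((4:ℝ)^L)⁻¹ * ((4:ℝ)^j)⁻¹) := by
              apply mul_le_mul_of_nonneg_right hpow (by positivity)
          _ = (L:ℝ)^e * ((4:ℝ)^L)⁻¹ * (((j:ℝ)+2)^e * (1/4:ℝ)^j) := by
              rw [mul_pow, ← h4]; ring
    _ = (L:ℝ)^e * ((4:ℝ)^L)⁻¹ * ∑ k ∈ Finset.Icc (L+1) N, g (k - L) := by
        rw [Finset.mul_sum]
    _ ≤ (L:ℝ)^e * ((4:ℝ)^L)⁻¹ * ∑' j : ℕ, g j := by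
        apply mul_le_mul_of_nonneg_left ?_ (by positivity)
        rw [← Finset.sum_image (f := g) (g := fun k => k - L)
          (by intro x hx y hy hxy; simp only [] at hxy; rw [Finset.mem_coe, Finset.mem_Icc] at hx hy; omega)]
        exact Summable.sum_le_tsum _ (fun j _ => hg_nonneg j) (ctc_geom_summable e)

set_option maxHeartbeats 1000000 in
/-- Abstract d-dimensional combination-technique convergence. -/
theorem combination_technique_convergence_d_dim (d : ℕ) (hd : 1 ≤ d) :
    ∃ C : ℝ, 0 < C ∧
      ∀ (E : Type*) (_ : NormedAddCommGroup E), ∀ (_ : NormedSpace ℝ E),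
      ∀ (P : E) (Q : (Fin d → ℕ) → E) (DQ : (Fin d → ℕ) → E),
        (∀ l, DQ l = ∑ s : Fin d → Fin 2,
          if (∀ i, (s i : ℕ) ≤ l i) then
            ((-1 : ℝ) ^ (∑ i, (s i : ℕ))) • Q (fun i => l i - (s i : ℕ))
          else 0) →
      ∀ (C₁ : ℝ), 0 < C₁ →
        (∀ l : Fin d → ℕ, ‖DQ l‖ ≤ C₁ * ((4 : ℝ) ^ (∑ i, l i))⁻¹) →
        Filter.Tendsto (fun m : ℕ => Q (fun _ => m)) Filter.atTop (nhds P) →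
      ∀ L : ℕ, 1 ≤ L →
        ‖(∑ l : Fin d → Fin (L + 1),
            if (∑ i, (l i : ℕ)) ≤ L then DQ (fun i => (l i : ℕ)) else 0) - P‖ ≤
          C * C₁ * (L : ℝ) ^ (d - 1) * ((4 : ℝ) ^ L)⁻¹ := by
  classical
  obtain ⟨e, rfl⟩ : ∃ e, d = e + 1 := ⟨d - 1, (Nat.succ_pred_eq_of_pos hd).symm⟩
  set S : ℝ := ∑' j : ℕ, ((j:ℝ)+2)^e * (1/4:ℝ)^j with hS
  have hS0 : 0 ≤ S := tsum_nonneg (fun j => by positivity)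
  refine ⟨S + 1, by linarith, ?_⟩
  intro E _ _ P Q DQ hDQ C₁ hC₁ hbound htend L hL
  set SL : E := ∑ l : Fin (e+1) → Fin (L + 1),
      if (∑ i, (l i : ℕ)) ≤ L then DQ (fun i => (l i : ℕ)) else 0 with hSL
  have key : ∀ M : ℕ, L ≤ M →
      ‖Q (fun _ => M) - SL‖ ≤ C₁ * ((L:ℝ)^e * ((4:ℝ)^L)⁻¹ * S) := by
    intro M hM
    have hM1 : 1 ≤ M := le_trans hL hM
    set B := Fintype.piFinset (fun _ : Fin (e+1) => Finset.range (M+1)) with hB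
    have hQ : Q (fun _ => M) = ∑ l ∈ B, DQ l := (ctc_telescope Q DQ hDQ M hM1).symm
    have hSL' : SL = ∑ l ∈ B, if (∑ i, l i) ≤ L then DQ l else 0 :=
      ctc_simplex_eq hM DQ
    rw [hQ, hSL', ← Finset.sum_sub_distrib]
    have hterm : ∀ l ∈ B, DQ l - (if (∑ i, l i) ≤ L then DQ l else 0)
        = (if ¬ ((∑ i, l i) ≤ L) then DQ l else 0) := by
      intro l _
      by_cases h : (∑ i, l i) ≤ L
      · rw [if_pos h, if_neg (not_not_intro h), sub_self]
      · rw [if_neg h, if_pos h, sub_zero]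
    rw [Finset.sum_congr rfl hterm, ← Finset.sum_filter]
    set T := B.filter (fun l => ¬ ((∑ i, l i) ≤ L)) with hT
    calc ‖∑ l ∈ T, DQ l‖ ≤ ∑ l ∈ T, ‖DQ l‖ := norm_sum_le _ _
      _ ≤ ∑ l ∈ T, C₁ * ((4:ℝ)^(∑ i, l i))⁻¹ :=
          Finset.sum_le_sum (fun l _ => hbound l)
      _ = C₁ * ∑ l ∈ T, ((4:ℝ)^(∑ i, l i))⁻¹ := by rw [Finset.mul_sum]
      _ ≤ C₁ * ((L:ℝ)^e * ((4:ℝ)^L)⁻¹ * S) := by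
          apply mul_le_mul_of_nonneg_left ?_ hC₁.le
          have hmap : ∀ l ∈ T, (∑ i, l i) ∈ Finset.Icc (L+1) ((e+1)*M) := by
            intro l hl
            rw [hT, Finset.mem_filter] at hl
            obtain ⟨hl1, hl2⟩ := hl
            rw [Finset.mem_Icc]
            constructor
            · omega
            · have : ∀ i, l i ≤ M := by
                intro i
                have := (Fintype.mem_piFinset.mp hl1) i
                rw [Finset.mem_range] at this
                omega
              calc ∑ i, l i ≤ ∑ _i : Fin (e+1), M :=
                    Finset.sum_le_sum (fun i _ => this i)
                _ = (e+1)*M := by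
                    rw [Finset.sum_const, Finset.card_univ, Fintype.card_fin,
                      smul_eq_mul]
          rw [← Finset.sum_fiberwise_of_maps_to hmap
            (fun l => ((4:ℝ)^(∑ i, l i))⁻¹)]
          calc ∑ k ∈ Finset.Icc (L+1) ((e+1)*M),
                  ∑ l ∈ T.filter (fun l => (∑ i, l i) = k), ((4:ℝ)^(∑ i, l i))⁻¹
              ≤ ∑ k ∈ Finset.Icc (L+1) ((e+1)*M), (((k:ℝ)+1)^e * ((4:ℝ)^k)⁻¹) := by
                apply Finset.sum_le_sum
                intro k _
                have hinner : ∀ l ∈ T.filter (fun l => (∑ i, l i) = k),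
                    ((4:ℝ)^(∑ i, l i))⁻¹ = ((4:ℝ)^k)⁻¹ := by
                  intro l hl
                  rw [Finset.mem_filter] at hl
                  rw [hl.2]
                rw [Finset.sum_congr rfl hinner, Finset.sum_const, nsmul_eq_mul]
                apply mul_le_mul_of_nonneg_right ?_ (by positivity)
                have := ctc_fiber_card T k
                calc ((T.filter (fun l => (∑ i, l i) = k)).card : ℝ)
                    ≤ (((k+1)^e : ℕ) : ℝ) := by exact_mod_cast this
                  _ = ((k:ℝ)+1)^e := by push_cast; ring
            _ ≤ (L:ℝ)^e * ((4:ℝ)^L)⁻¹ * S := ctc_tail_sum e L hL _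
  have htendN : Filter.Tendsto (fun M : ℕ => ‖SL - Q (fun _ => M)‖)
      Filter.atTop (nhds ‖SL - P‖) :=
    (Filter.Tendsto.sub tendsto_const_nhds htend).norm
  have hfin : ‖SL - P‖ ≤ C₁ * ((L:ℝ)^e * ((4:ℝ)^L)⁻¹ * S) := by
    apply le_of_tendsto htendN
    filter_upwards [Filter.eventually_ge_atTop L] with M hM
    rw [norm_sub_rev]
    exact key M hM
  have hred : (e + 1 - 1) = e := by omega
  rw [hred]
  have hX : (0:ℝ) ≤ (L:ℝ)^e * ((4:ℝ)^L)⁻¹ := by positivity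
  calc ‖SL - P‖ ≤ C₁ * ((L:ℝ)^e * ((4:ℝ)^L)⁻¹ * S) := hfin
    _ ≤ (S + 1) * C₁ * (L:ℝ)^e * ((4:ℝ)^L)⁻¹ := by nlinarith [mul_nonneg hC₁.le hX]
end

section
/- (Multilevel Monte Carlo complexity for the sparse combination estimator.) Let d ≥ 1 be an integer and C₁, C₂, C₃ > 0. Let (e_l)_{l≥0}, (v_l)_{l≥0}, (w_l)_{l≥0} be sequences of nonnegative reals satisfying e_l ≤ C₁·(l+1)^{d−1}·2^{−2l}, v_l ≤ C₂·(l+1)^{2(d−1)}·2^{−4l}, and w_l ≤ C₃·(l+1)^{d−1}·2^{3l} for all l. Then there exists C > 0 such that for every ε ∈ (0,1) there exist an integer L ≥ 0 and positive integers M₀,…,M_L with (∑_{l>L} e_l)² + ∑_{l=0}^{L} v_l/M_l ≤ ε² and ∑_{l=0}^{L} M_l·w_l ≤ C·ε^{−2}. -/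
/-- Polynomial growth is dominated by geometric growth with ratio `9/8`. -/
lemma mlmc_aux_poly_bound (k : ℕ) :
    ∃ K : ℝ, 1 ≤ K ∧ ∀ l : ℕ, ((l : ℝ) + 1) ^ k ≤ K * (9/8 : ℝ) ^ l := by
  have hsum : Summable (fun n : ℕ => (n : ℝ) ^ k * (8/9 : ℝ) ^ n) :=
    summable_pow_mul_geometric_of_norm_lt_one k
      (by rw [Real.norm_eq_abs, abs_of_pos (by norm_num)]; norm_num)
  have htend := hsum.tendsto_atTop_zero
  obtain ⟨K0, hK0⟩ := htend.bddAbove_range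
  refine ⟨max 1 ((9/8) * K0), le_max_left _ _, fun l => ?_⟩
  have h1 : ((l + 1 : ℕ) : ℝ) ^ k * (8/9 : ℝ) ^ (l + 1) ≤ K0 := hK0 ⟨l + 1, rfl⟩
  have h1' : ((l : ℝ) + 1) ^ k * (8/9 : ℝ) ^ (l + 1) ≤ K0 := by push_cast at h1; exact h1
  have hp : (0 : ℝ) < (8/9 : ℝ) ^ (l + 1) := by positivity
  have h2 : ((l : ℝ) + 1) ^ k ≤ K0 / (8/9 : ℝ) ^ (l + 1) := (le_div_iff₀ hp).2 h1'
  have h3 : K0 / (8/9 : ℝ) ^ (l + 1) = (9/8 * K0) * (9/8 : ℝ) ^ l := by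
    rw [div_eq_mul_inv, ← inv_pow, pow_succ]
    norm_num
    ring
  calc ((l : ℝ) + 1) ^ k ≤ (9/8 * K0) * (9/8 : ℝ) ^ l := h2.trans_eq h3
    _ ≤ max 1 ((9/8) * K0) * (9/8 : ℝ) ^ l :=
        mul_le_mul_of_nonneg_right (le_max_right _ _) (by positivity)

/-- Multilevel Monte Carlo complexity for the sparse combination estimator:
total cost `O(ε⁻²)`. -/
theorem mlmc_sparse_combination_complexity
    (d : ℕ) (hd : 1 ≤ d) (C₁ C₂ C₃ : ℝ) (hC₁ : 0 < C₁) (hC₂ : 0 < C₂) (hC₃ : 0 < C₃)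
    (e v w : ℕ → ℝ)
    (he0 : ∀ l, 0 ≤ e l) (hv0 : ∀ l, 0 ≤ v l) (hw0 : ∀ l, 0 ≤ w l)
    (he : ∀ l, e l ≤ C₁ * ((l : ℝ) + 1) ^ (d - 1) * ((2 : ℝ) ^ (2 * l))⁻¹)
    (hv : ∀ l, v l ≤ C₂ * ((l : ℝ) + 1) ^ (2 * (d - 1)) * ((2 : ℝ) ^ (4 * l))⁻¹)
    (hw : ∀ l, w l ≤ C₃ * ((l : ℝ) + 1) ^ (d - 1) * (2 : ℝ) ^ (3 * l)) :
    ∃ C : ℝ, 0 < C ∧ ∀ ε : ℝ, 0 < ε → ε < 1 →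
      ∃ (L : ℕ) (M : ℕ → ℕ), (∀ l ≤ L, 0 < M l) ∧
        (∑' l : {n : ℕ // L < n}, e l) ^ 2
            + ∑ l ∈ Finset.range (L + 1), v l / (M l : ℝ) ≤ ε ^ 2 ∧
        ∑ l ∈ Finset.range (L + 1), (M l : ℝ) * w l ≤ C / ε ^ 2 := by
  obtain ⟨K, hK1, hK⟩ := mlmc_aux_poly_bound (d - 1)
  have hK0 : (0 : ℝ) < K := lt_of_lt_of_le one_pos hK1
  have hC₂' : C₂ ≠ 0 := hC₂.ne'
  have hK' : K ≠ 0 := hK0.ne'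
  set A : ℝ := 10 * C₂ * K ^ 2 with hA
  have hA0 : 0 < A := by positivity
  set B : ℝ := max (3 * C₁ * K) 1 with hB
  have hB1 : (1 : ℝ) ≤ B := le_max_right _ _
  have hB0 : (0 : ℝ) < B := lt_of_lt_of_le one_pos hB1
  have hBge : 3 * C₁ * K ≤ B := le_max_left _ _
  -- power computations
  have hp2 : ∀ l : ℕ, (9/8 : ℝ) ^ l * ((2 : ℝ) ^ (2 * l))⁻¹ = (9/32 : ℝ) ^ l := by
    intro l; rw [pow_mul, ← inv_pow, ← mul_pow]; norm_num
  have hp4 : ∀ l : ℕ, (81/64 : ℝ) ^ l * ((2 : ℝ) ^ (4 * l))⁻¹ = (81/1024 : ℝ) ^ l := by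
    intro l; rw [pow_mul, ← inv_pow, ← mul_pow]; norm_num
  have hp3 : ∀ l : ℕ, (9/8 : ℝ) ^ l * (2 : ℝ) ^ (3 * l) = (9 : ℝ) ^ l := by
    intro l; rw [pow_mul, ← mul_pow]; norm_num
  -- improved bounds
  have he' : ∀ l, e l ≤ C₁ * K * (9/32 : ℝ) ^ l := by
    intro l
    calc e l ≤ C₁ * ((l : ℝ) + 1) ^ (d - 1) * ((2 : ℝ) ^ (2 * l))⁻¹ := he l
      _ ≤ C₁ * (K * (9/8 : ℝ) ^ l) * ((2 : ℝ) ^ (2 * l))⁻¹ := by gcongr; exact hK l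
      _ = C₁ * K * ((9/8 : ℝ) ^ l * ((2 : ℝ) ^ (2 * l))⁻¹) := by ring
      _ = C₁ * K * (9/32 : ℝ) ^ l := by rw [hp2]
  have hv' : ∀ l, v l ≤ C₂ * K ^ 2 * (81/1024 : ℝ) ^ l := by
    intro l
    have h1 : ((l : ℝ) + 1) ^ (2 * (d - 1)) ≤ K ^ 2 * (81/64 : ℝ) ^ l := by
      calc ((l : ℝ) + 1) ^ (2 * (d - 1)) = (((l : ℝ) + 1) ^ (d - 1)) ^ 2 := by
            rw [← pow_mul, mul_comm]
        _ ≤ (K * (9/8 : ℝ) ^ l) ^ 2 := by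
            apply pow_le_pow_left₀ (by positivity) (hK l)
        _ = K ^ 2 * (81/64 : ℝ) ^ l := by
            rw [mul_pow, ← pow_mul, mul_comm l 2, pow_mul]; norm_num
    calc v l ≤ C₂ * ((l : ℝ) + 1) ^ (2 * (d - 1)) * ((2 : ℝ) ^ (4 * l))⁻¹ := hv l
      _ ≤ C₂ * (K ^ 2 * (81/64 : ℝ) ^ l) * ((2 : ℝ) ^ (4 * l))⁻¹ := by gcongr
      _ = C₂ * K ^ 2 * ((81/64 : ℝ) ^ l * ((2 : ℝ) ^ (4 * l))⁻¹) := by ring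
      _ = C₂ * K ^ 2 * (81/1024 : ℝ) ^ l := by rw [hp4]
  have hw' : ∀ l, w l ≤ C₃ * K * (9 : ℝ) ^ l := by
    intro l
    calc w l ≤ C₃ * ((l : ℝ) + 1) ^ (d - 1) * (2 : ℝ) ^ (3 * l) := hw l
      _ ≤ C₃ * (K * (9/8 : ℝ) ^ l) * (2 : ℝ) ^ (3 * l) := by gcongr; exact hK l
      _ = C₃ * K * ((9/8 : ℝ) ^ l * (2 : ℝ) ^ (3 * l)) := by ring
      _ = C₃ * K * (9 : ℝ) ^ l := by rw [hp3]
  refine ⟨10 * A * C₃ * K + 2 * C₃ * K * B ^ 2, by positivity, fun ε hε hε1 => ?_⟩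
  have hε2 : (0 : ℝ) < ε ^ 2 := by positivity
  -- choose L
  have hex : ∃ n : ℕ, (9/32 : ℝ) ^ (n + 1) ≤ ε / B := by
    have h0 : (0 : ℝ) < ε / B := by positivity
    have := tendsto_pow_atTop_nhds_zero_of_lt_one (by norm_num : (0:ℝ) ≤ 9/32)
      (by norm_num : (9/32 : ℝ) < 1)
    have hev := this.eventually_le_const h0
    obtain ⟨N, hN⟩ := hev.exists_forall_of_atTop
    exact ⟨N, hN (N + 1) (by omega)⟩
  set L := Nat.find hex with hLdef
  have hL : (9/32 : ℝ) ^ (L + 1) ≤ ε / B := Nat.find_spec hex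
  set M : ℕ → ℕ := fun l => ⌈A / ε ^ 2 * (1/10 : ℝ) ^ l⌉₊ with hM
  have hMpos : ∀ l, 0 < M l := fun l => Nat.ceil_pos.2 (by positivity)
  have hMge : ∀ l, A / ε ^ 2 * (1/10 : ℝ) ^ l ≤ (M l : ℝ) := fun l => Nat.le_ceil _
  have hMle : ∀ l, (M l : ℝ) ≤ A / ε ^ 2 * (1/10 : ℝ) ^ l + 1 :=
    fun l => (Nat.ceil_lt_add_one (by positivity)).le
  refine ⟨L, M, fun l _ => hMpos l, ?_, ?_⟩
  · -- accuracy
    have hTb : (∑' l : {n : ℕ // L < n}, e l) ≤ ε / 2 := by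
      let g : ℕ ≃ {n : ℕ // L < n} :=
        { toFun := fun i => ⟨L + 1 + i, by omega⟩
          invFun := fun n => n.1 - (L + 1)
          left_inv := fun i => by simp
          right_inv := fun n => by
            have := n.2
            exact Subtype.ext (by simp; omega) }
      have hTeq : (∑' l : {n : ℕ // L < n}, e l) = ∑' i : ℕ, e (L + 1 + i) :=
        (g.tsum_eq (fun n : {n : ℕ // L < n} => e n)).symm
      have hsumg : Summable (fun i : ℕ => C₁ * K * (9/32 : ℝ) ^ (L + 1 + i)) := by
        have : Summable (fun i : ℕ => (9/32 : ℝ) ^ i) :=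
          summable_geometric_of_lt_one (by norm_num) (by norm_num)
        simpa [pow_add, mul_assoc] using (this.mul_left (C₁ * K * (9/32 : ℝ) ^ (L + 1)))
      have hsume : Summable (fun i : ℕ => e (L + 1 + i)) :=
        Summable.of_nonneg_of_le (fun i => he0 _) (fun i => he' _) hsumg
      have hfrac : C₁ * K / B ≤ 1/3 := by
        rw [div_le_iff₀ hB0]; nlinarith
      rw [hTeq]
      calc ∑' i : ℕ, e (L + 1 + i) ≤ ∑' i : ℕ, C₁ * K * (9/32 : ℝ) ^ (L + 1 + i) :=
            Summable.tsum_le_tsum (fun i => he' _) hsume hsumg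
        _ = C₁ * K * (9/32 : ℝ) ^ (L + 1) * (1 - 9/32 : ℝ)⁻¹ := by
            simp only [pow_add, ← mul_assoc]
            rw [tsum_mul_left, tsum_geometric_of_lt_one (by norm_num) (by norm_num)]
        _ ≤ C₁ * K * (ε / B) * (1 - 9/32 : ℝ)⁻¹ := by gcongr
        _ = (C₁ * K / B) * ε * (32/23) := by norm_num; ring
        _ ≤ (1/3) * ε * (32/23) := by gcongr
        _ ≤ ε / 2 := by linarith
    have hT0 : (0 : ℝ) ≤ ∑' l : {n : ℕ // L < n}, e l := tsum_nonneg (fun l => he0 _)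
    have hTsq : (∑' l : {n : ℕ // L < n}, e l) ^ 2 ≤ ε ^ 2 / 4 := by nlinarith
    have hterm : ∀ l, v l / (M l : ℝ) ≤ ε ^ 2 / 10 * (405/512 : ℝ) ^ l := by
      intro l
      have hx : (0 : ℝ) < A / ε ^ 2 * (1/10 : ℝ) ^ l := by positivity
      have key : (81/1024 : ℝ) ^ l * ((1/10 : ℝ) ^ l)⁻¹ = (405/512 : ℝ) ^ l := by
        rw [← inv_pow, ← mul_pow]; norm_num
      calc v l / (M l : ℝ) ≤ v l / (A / ε ^ 2 * (1/10 : ℝ) ^ l) := by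
            gcongr
            · exact hv0 l
            · exact hMge l
        _ ≤ (C₂ * K ^ 2 * (81/1024 : ℝ) ^ l) / (A / ε ^ 2 * (1/10 : ℝ) ^ l) := by
            gcongr
            exact hv' l
        _ = (C₂ * K ^ 2) * ((81/1024 : ℝ) ^ l * ((1/10 : ℝ) ^ l)⁻¹) * (ε ^ 2 / A) := by
            rw [div_eq_mul_inv, mul_inv, inv_div]
            ring
        _ = (C₂ * K ^ 2) * (405/512 : ℝ) ^ l * (ε ^ 2 / A) := by rw [key]
        _ = ε ^ 2 / 10 * (405/512 : ℝ) ^ l := by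
            rw [hA]; field_simp
    have hvar : ∑ l ∈ Finset.range (L + 1), v l / (M l : ℝ) ≤ ε ^ 2 / 2 := by
      calc ∑ l ∈ Finset.range (L + 1), v l / (M l : ℝ)
          ≤ ∑ l ∈ Finset.range (L + 1), ε ^ 2 / 10 * (405/512 : ℝ) ^ l :=
            Finset.sum_le_sum (fun l _ => hterm l)
        _ = ε ^ 2 / 10 * ∑ l ∈ Finset.range (L + 1), (405/512 : ℝ) ^ l := by
            rw [Finset.mul_sum]
        _ ≤ ε ^ 2 / 10 * (1 - 405/512 : ℝ)⁻¹ := by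
            apply mul_le_mul_of_nonneg_left _ (by positivity)
            exact le_trans
              (Summable.sum_le_tsum _ (fun i _ => by positivity)
                (summable_geometric_of_lt_one (by norm_num) (by norm_num)))
              (le_of_eq (tsum_geometric_of_lt_one (by norm_num) (by norm_num)))
        _ ≤ ε ^ 2 / 2 := by
            rw [show ((1 : ℝ) - 405/512)⁻¹ = 512/107 by norm_num]
            nlinarith
    linarith
  · -- cost
    have h9L : (9 : ℝ) ^ L ≤ B ^ 2 / ε ^ 2 := by
      have h32 : (32/9 : ℝ) ^ L ≤ B / ε := by
        rcases Nat.eq_zero_or_pos L with h0 | h0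
        · rw [h0]
          simp only [pow_zero]
          rw [le_div_iff₀ hε]
          nlinarith
        · have hmin : ¬ ((9/32 : ℝ) ^ ((L - 1) + 1) ≤ ε / B) :=
            Nat.find_min hex (by omega)
          have hLL : (L - 1) + 1 = L := by omega
          rw [hLL] at hmin
          push_neg at hmin
          have hinv : ((9/32 : ℝ) ^ L)⁻¹ < (ε / B)⁻¹ :=
            inv_strictAnti₀ (by positivity) hmin
          rw [inv_div, ← inv_pow] at hinv
          norm_num at hinv
          exact hinv.le
      calc (9 : ℝ) ^ L ≤ (1024/81 : ℝ) ^ L := by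
            apply pow_le_pow_left₀ (by norm_num) (by norm_num)
        _ = ((32/9 : ℝ) ^ L) ^ 2 := by
            rw [← pow_mul, mul_comm L 2, pow_mul]; norm_num
        _ ≤ (B / ε) ^ 2 := by
            apply pow_le_pow_left₀ (by positivity) h32
        _ = B ^ 2 / ε ^ 2 := by rw [div_pow]
    have hcost_term : ∀ l, (M l : ℝ) * w l ≤
        A * C₃ * K / ε ^ 2 * (9/10 : ℝ) ^ l + C₃ * K * (9 : ℝ) ^ l := by
      intro l
      have hmp : (1/10 : ℝ) ^ l * (9 : ℝ) ^ l = (9/10 : ℝ) ^ l := by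
        rw [← mul_pow]; norm_num
      calc (M l : ℝ) * w l ≤ (A / ε ^ 2 * (1/10 : ℝ) ^ l + 1) * (C₃ * K * (9 : ℝ) ^ l) :=
            mul_le_mul (hMle l) (hw' l) (hw0 l) (by positivity)
        _ = A * C₃ * K / ε ^ 2 * ((1/10 : ℝ) ^ l * (9 : ℝ) ^ l) + C₃ * K * (9 : ℝ) ^ l := by
            ring
        _ = A * C₃ * K / ε ^ 2 * (9/10 : ℝ) ^ l + C₃ * K * (9 : ℝ) ^ l := by rw [hmp]
    have h9sum : ∑ l ∈ Finset.range (L + 1), (9 : ℝ) ^ l ≤ 2 * (9 : ℝ) ^ L := by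
      have h9 : (0 : ℝ) ≤ (9 : ℝ) ^ L := by positivity
      rw [geom_sum_eq (by norm_num : (9:ℝ) ≠ 1), pow_succ]
      rw [div_le_iff₀ (by norm_num : (0:ℝ) < 9 - 1)]
      nlinarith
    calc ∑ l ∈ Finset.range (L + 1), (M l : ℝ) * w l
        ≤ ∑ l ∈ Finset.range (L + 1),
            (A * C₃ * K / ε ^ 2 * (9/10 : ℝ) ^ l + C₃ * K * (9 : ℝ) ^ l) :=
          Finset.sum_le_sum (fun l _ => hcost_term l)
      _ = A * C₃ * K / ε ^ 2 * (∑ l ∈ Finset.range (L + 1), (9/10 : ℝ) ^ l)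
            + C₃ * K * (∑ l ∈ Finset.range (L + 1), (9 : ℝ) ^ l) := by
          rw [Finset.sum_add_distrib, Finset.mul_sum, Finset.mul_sum]
      _ ≤ A * C₃ * K / ε ^ 2 * 10 + C₃ * K * (2 * (9 : ℝ) ^ L) := by
          apply add_le_add
          · apply mul_le_mul_of_nonneg_left _ (by positivity)
            calc ∑ l ∈ Finset.range (L + 1), (9/10 : ℝ) ^ l
                ≤ ∑' l : ℕ, (9/10 : ℝ) ^ l :=
                  Summable.sum_le_tsum _ (fun i _ => by positivity)
                    (summable_geometric_of_lt_one (by norm_num) (by norm_num))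
              _ = 10 := by
                  rw [tsum_geometric_of_lt_one (by norm_num) (by norm_num)]; norm_num
          · exact mul_le_mul_of_nonneg_left h9sum (by positivity)
      _ ≤ A * C₃ * K / ε ^ 2 * 10 + C₃ * K * (2 * (B ^ 2 / ε ^ 2)) := by
          gcongr
      _ = (10 * A * C₃ * K + 2 * C₃ * K * B ^ 2) / ε ^ 2 := by
          field_simp
end

section
/- (Complexity of the sparse combination technique with standard Monte Carlo.) Let d ≥ 1 be an integer and C₁, C₂ > 0, V ≥ 0. Let (b_L)_{L≥0} and (w_L)_{L≥0} be sequences of nonnegative reals with b_L ≤ C₁·(L+1)^{d−1}·2^{−2L} and w_L ≤ C₂·(L+1)^{d−1}·2^{3L} for all L. Then there exists C > 0 (depending on d, C₁, C₂, V) such that for every ε ∈ (0,1/2) there exist an integer L ≥ 0 and a positive integer M with b_L² + V/M ≤ ε² and M·w_L ≤ C·ε^{−7/2}·(log(1/ε))^{5(d−1)/2}. -/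
/-- Polynomial growth is dominated by `2^n` up to a constant. -/
lemma poly_le_exp_aux (e : ℕ) : ∃ c : ℝ, 1 ≤ c ∧ ∀ n : ℕ, ((n : ℝ) + 1) ^ e ≤ c * 2 ^ n := by
  have htend := tendsto_pow_const_div_const_pow_of_one_lt e (by norm_num : (1:ℝ) < 2)
  obtain ⟨c₀, hc₀⟩ := htend.bddAbove_range
  refine ⟨max (2 * c₀) 1, le_max_right _ _, fun n => ?_⟩
  have h1 : ((n + 1 : ℕ) : ℝ) ^ e / 2 ^ (n + 1) ≤ c₀ := hc₀ ⟨n + 1, rfl⟩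
  have h2 : (0:ℝ) < 2 ^ (n + 1) := by positivity
  have h3 : ((n : ℝ) + 1) ^ e ≤ c₀ * 2 ^ (n + 1) := by
    have := (div_le_iff₀ h2).mp h1
    push_cast at this
    linarith
  have h4 : c₀ * 2 ^ (n + 1) = (2 * c₀) * 2 ^ n := by ring
  have h5 : (2 * c₀ : ℝ) ≤ max (2 * c₀) 1 := le_max_left _ _
  have h6 : (0:ℝ) ≤ 2 ^ n := by positivity
  nlinarith

set_option maxHeartbeats 1600000 in
/-- Complexity of the sparse combination technique with standard Monte Carlo:
total cost `O(ε^{−7/2}·(log(1/ε))^{5(d−1)/2})`. -/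
theorem sparse_combination_standard_mc_complexity
    (d : ℕ) (hd : 1 ≤ d) (C₁ C₂ V : ℝ) (hC₁ : 0 < C₁) (hC₂ : 0 < C₂) (hV : 0 ≤ V)
    (b w : ℕ → ℝ) (hb0 : ∀ L, 0 ≤ b L) (hw0 : ∀ L, 0 ≤ w L)
    (hb : ∀ L, b L ≤ C₁ * ((L : ℝ) + 1) ^ (d - 1) * ((2 : ℝ) ^ (2 * L))⁻¹)
    (hw : ∀ L, w L ≤ C₂ * ((L : ℝ) + 1) ^ (d - 1) * (2 : ℝ) ^ (3 * L)) :
    ∃ C : ℝ, 0 < C ∧ ∀ ε : ℝ, 0 < ε → ε < 1 / 2 →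
      ∃ (L : ℕ) (M : ℕ), 0 < M ∧
        b L ^ 2 + V / (M : ℝ) ≤ ε ^ 2 ∧
        (M : ℝ) * w L ≤
          C * ε ^ (-(7 : ℝ) / 2) * (Real.log (1 / ε)) ^ ((5 * ((d : ℝ) - 1)) / 2) := by
  classical
  set n : ℕ := d - 1 with hn
  have hcast : ((d : ℝ) - 1) = (n : ℝ) := by
    rw [hn, Nat.cast_sub hd]; norm_num
  obtain ⟨c, hc1, hc⟩ := poly_le_exp_aux n
  have hs2 : (0:ℝ) < Real.sqrt 2 := Real.sqrt_pos.mpr (by norm_num)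
  obtain ⟨D, hD⟩ : ∃ D : ℝ, D = 4 * Real.sqrt 2 * C₁ + 1 := ⟨_, rfl⟩
  have hD1 : (1:ℝ) ≤ D := by rw [hD]; nlinarith
  have hDpos : (0:ℝ) < D := by linarith
  obtain ⟨E, hE⟩ : ∃ E : ℝ, E = max (D * c) 1 := ⟨_, rfl⟩
  have hE1 : (1:ℝ) ≤ E := hE ▸ le_max_right _ _
  have hEpos : (0:ℝ) < E := by linarith
  have hlogE : (0:ℝ) ≤ Real.log E := Real.log_nonneg hE1
  have hlog2 : (0:ℝ) < Real.log 2 := Real.log_pos (by norm_num)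
  obtain ⟨B, hB⟩ : ∃ B : ℝ, B = Real.log E / (Real.log 2) ^ 2 + 2 / Real.log 2 := ⟨_, rfl⟩
  have hBpos : (0:ℝ) < B := by rw [hB]; positivity
  refine ⟨(2 * V + 2) * C₂ * D ^ ((3:ℝ)/2) * B ^ ((5 * (n:ℝ)) / 2), by positivity, ?_⟩
  intro ε hε hε2
  obtain ⟨ℓ, hℓdef⟩ : ∃ l : ℝ, l = Real.log (1 / ε) := ⟨_, rfl⟩
  rw [← hℓdef]
  have hinv2 : (2:ℝ) ≤ 1 / ε := by
    rw [le_div_iff₀ hε]; linarith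
  have hℓ2 : Real.log 2 ≤ ℓ := by
    rw [hℓdef]
    exact Real.log_le_log (by norm_num) hinv2
  have hℓpos : (0:ℝ) < ℓ := lt_of_lt_of_le hlog2 hℓ2
  -- existence of a level L with small bias bound
  have hex : ∃ L : ℕ, C₁ * ((L : ℝ) + 1) ^ n * ((2 : ℝ) ^ (2 * L))⁻¹ ≤ ε / Real.sqrt 2 := by
    obtain ⟨m, hm⟩ := pow_unbounded_of_one_lt (Real.sqrt 2 * C₁ * c / ε) (by norm_num : (1:ℝ) < 2)
    refine ⟨m, ?_⟩
    have h2m : (0:ℝ) < 2 ^ m := by positivity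
    have h2m2 : (0:ℝ) < 2 ^ (2 * m) := by positivity
    have hkey : Real.sqrt 2 * C₁ * c < ε * 2 ^ m := by
      have := (div_lt_iff₀ hε).mp hm
      nlinarith
    calc C₁ * ((m : ℝ) + 1) ^ n * ((2 : ℝ) ^ (2 * m))⁻¹
        ≤ C₁ * (c * 2 ^ m) * ((2 : ℝ) ^ (2 * m))⁻¹ := by
          gcongr
          exact hc m
      _ = C₁ * c / 2 ^ m := by
          rw [two_mul, pow_add]
          field_simp
      _ ≤ ε / Real.sqrt 2 := by
          rw [div_le_div_iff₀ h2m hs2]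
          nlinarith
  obtain ⟨L, hPL, hmin⟩ : ∃ L : ℕ,
      (C₁ * ((L : ℝ) + 1) ^ n * ((2 : ℝ) ^ (2 * L))⁻¹ ≤ ε / Real.sqrt 2) ∧
      ∀ k < L, ¬ (C₁ * ((k : ℝ) + 1) ^ n * ((2 : ℝ) ^ (2 * k))⁻¹ ≤ ε / Real.sqrt 2) :=
    ⟨Nat.find hex, Nat.find_spec hex, fun k hk => Nat.find_min hex hk⟩
  obtain ⟨x, hx⟩ : ∃ x : ℝ, x = (L : ℝ) + 1 := ⟨_, rfl⟩
  have hx1 : (1:ℝ) ≤ x := by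
    rw [hx]
    have : (0:ℝ) ≤ (L:ℝ) := Nat.cast_nonneg L
    linarith
  have hx0 : (0:ℝ) < x := by linarith
  -- key upper bound on 2^(2L)
  have h4L : (2 : ℝ) ^ (2 * L) ≤ D * x ^ n / ε := by
    rcases Nat.eq_zero_or_pos L with h0 | hLpos
    · rw [hx, h0]
      simp only [Nat.cast_zero, mul_zero, pow_zero, zero_add, one_pow]
      rw [le_div_iff₀ hε, one_mul, mul_one]
      linarith
    · obtain ⟨k, hk⟩ : ∃ k, L = k + 1 := ⟨L - 1, (Nat.succ_pred_eq_of_pos hLpos).symm⟩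
      have hnotP := hmin k (by omega)
      push_neg at hnotP
      have h1 : ε / Real.sqrt 2 < C₁ * ((k : ℝ) + 1) ^ n * ((2 : ℝ) ^ (2 * k))⁻¹ := hnotP
      have h2k : (0:ℝ) < 2 ^ (2 * k) := by positivity
      have h2 : ε * (2:ℝ) ^ (2 * k) < Real.sqrt 2 * (C₁ * ((k : ℝ) + 1) ^ n) := by
        rw [div_lt_iff₀ hs2] at h1
        have := mul_lt_mul_of_pos_right h1 h2k
        calc ε * (2:ℝ) ^ (2 * k) < C₁ * ((k : ℝ) + 1) ^ n * ((2 : ℝ) ^ (2 * k))⁻¹ *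
              Real.sqrt 2 * 2 ^ (2 * k) := this
          _ = Real.sqrt 2 * (C₁ * ((k : ℝ) + 1) ^ n) := by
              field_simp
      have hmono : ((k : ℝ) + 1) ^ n ≤ x ^ n := by
        apply pow_le_pow_left₀ (by positivity)
        rw [hx, hk]; push_cast; linarith
      have hpk : (0:ℝ) ≤ ((k : ℝ) + 1) ^ n := by positivity
      have hpow : (2:ℝ) ^ (2 * L) = 4 * 2 ^ (2 * k) := by
        rw [hk, show 2 * (k + 1) = 2 * k + 2 from by ring, pow_add]; ring
      rw [le_div_iff₀ hε, hpow, hD]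
      have hsC : (0:ℝ) < Real.sqrt 2 * C₁ := by positivity
      have hxn1 : (1:ℝ) ≤ x ^ n := by
        calc (1:ℝ) = 1 ^ n := (one_pow n).symm
          _ ≤ x ^ n := pow_le_pow_left₀ (by norm_num) hx1 n
      have h2' : 4 * (ε * 2 ^ (2 * k)) ≤ 4 * (Real.sqrt 2 * C₁ * ((k : ℝ) + 1) ^ n) := by
        linarith [h2]
      have h3' : Real.sqrt 2 * C₁ * ((k : ℝ) + 1) ^ n ≤ Real.sqrt 2 * C₁ * x ^ n :=
        mul_le_mul_of_nonneg_left hmono (le_of_lt hsC)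
      linarith [h2', h3', hxn1]
  -- bound on L in terms of log(1/ε)
  have h2L : (2:ℝ) ^ L ≤ E / ε := by
    have hstep : (2:ℝ) ^ (2 * L) ≤ D * (c * 2 ^ L) / ε := by
      refine h4L.trans ?_
      gcongr
      rw [hx]
      exact hc L
    have h2Lpos : (0:ℝ) < (2:ℝ) ^ L := by positivity
    have hsq : (2:ℝ) ^ (2 * L) = 2 ^ L * 2 ^ L := by rw [two_mul, pow_add]
    have : (2:ℝ) ^ L * 2 ^ L ≤ (D * c / ε) * 2 ^ L := by
      rw [← hsq]
      calc (2:ℝ) ^ (2 * L) ≤ D * (c * 2 ^ L) / ε := hstep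
        _ = (D * c / ε) * 2 ^ L := by ring
    have h1 : (2:ℝ) ^ L ≤ D * c / ε := le_of_mul_le_mul_right this h2Lpos
    refine h1.trans ?_
    gcongr
    rw [hE]
    exact le_max_left _ _
  have hlogL : (L : ℝ) * Real.log 2 ≤ Real.log E + ℓ := by
    have h1 : Real.log ((2:ℝ) ^ L) ≤ Real.log (E / ε) :=
      Real.log_le_log (by positivity) h2L
    rw [Real.log_pow, Real.log_div (ne_of_gt hEpos) (ne_of_gt hε)] at h1
    have h2 : ℓ = -Real.log ε := by rw [hℓdef, one_div, Real.log_inv]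
    push_cast
    linarith
  have hLB : x ≤ B * ℓ := by
    have key : x * (Real.log 2) ^ 2 ≤ Real.log E * ℓ + 2 * ℓ * Real.log 2 := by
      have e1 : Real.log E * Real.log 2 ≤ Real.log E * ℓ :=
        mul_le_mul_of_nonneg_left hℓ2 hlogE
      have e2 : (Real.log 2) ^ 2 ≤ ℓ * Real.log 2 := by
        rw [pow_two]
        exact mul_le_mul_of_nonneg_right hℓ2 (le_of_lt hlog2)
      have e3 := mul_le_mul_of_nonneg_right hlogL (le_of_lt hlog2)
      rw [hx]
      linarith [e1, e2, e3]
    calc x = x * (Real.log 2) ^ 2 / (Real.log 2) ^ 2 := by field_simp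
      _ ≤ (Real.log E * ℓ + 2 * ℓ * Real.log 2) / (Real.log 2) ^ 2 := by
          gcongr
      _ = B * ℓ := by rw [hB]; field_simp
  -- choice of sample number M
  set M : ℕ := ⌈2 * V / ε ^ 2⌉₊ + 1 with hM
  have hMpos : 0 < M := Nat.succ_pos _
  have hε2pos : (0:ℝ) < ε ^ 2 := by positivity
  have hMlow : 2 * V / ε ^ 2 ≤ (M : ℝ) := by
    have := Nat.le_ceil (2 * V / ε ^ 2)
    rw [hM]; push_cast; linarith
  have hMup : (M : ℝ) ≤ (2 * V + 2) / ε ^ 2 := by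
    have h1 : (⌈2 * V / ε ^ 2⌉₊ : ℝ) < 2 * V / ε ^ 2 + 1 :=
      Nat.ceil_lt_add_one (by positivity)
    have h2 : (2:ℝ) ≤ 2 / ε ^ 2 := by
      rw [le_div_iff₀ hε2pos]; nlinarith
    rw [hM]; push_cast
    have : (2 * V + 2) / ε ^ 2 = 2 * V / ε ^ 2 + 2 / ε ^ 2 := by ring
    linarith
  refine ⟨L, M, hMpos, ?_, ?_⟩
  · -- mean square error bound
    have hbL : b L ≤ ε / Real.sqrt 2 := (hb L).trans hPL
    have hb2 : b L ^ 2 ≤ ε ^ 2 / 2 := by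
      have h1 : b L ^ 2 ≤ (ε / Real.sqrt 2) ^ 2 := pow_le_pow_left₀ (hb0 L) hbL 2
      have h2 : (ε / Real.sqrt 2) ^ 2 = ε ^ 2 / 2 := by
        rw [div_pow, Real.sq_sqrt (by norm_num : (0:ℝ) ≤ 2)]
      linarith
    have hVM : V / (M : ℝ) ≤ ε ^ 2 / 2 := by
      rw [div_le_iff₀ (by positivity : (0:ℝ) < (M:ℝ))]
      have := (div_le_iff₀ hε2pos).mp hMlow
      nlinarith
    linarith
  · -- cost bound
    rw [hcast]
    have hℓq : (0:ℝ) ≤ (5 * (n:ℝ)) / 2 := by positivity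
    -- rpow bound on 2^(3L)
    have hpow32 : (2:ℝ) ^ (3 * L) = ((2:ℝ) ^ (2 * L)) ^ ((3:ℝ)/2 : ℝ) := by
      rw [← Real.rpow_natCast (2:ℝ) (2 * L), ← Real.rpow_mul (by norm_num : (0:ℝ) ≤ 2),
        ← Real.rpow_natCast (2:ℝ) (3 * L)]
      congr 1
      push_cast
      ring
    have hxn0 : (0:ℝ) ≤ x ^ n := by positivity
    have h3L : (2:ℝ) ^ (3 * L) ≤
        D ^ ((3:ℝ)/2) * x ^ ((3 * (n:ℝ))/2) * ε ^ (-(3:ℝ)/2) := by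
      rw [hpow32]
      calc ((2:ℝ) ^ (2 * L)) ^ ((3:ℝ)/2 : ℝ)
          ≤ (D * x ^ n / ε) ^ ((3:ℝ)/2 : ℝ) :=
            Real.rpow_le_rpow (by positivity) h4L (by norm_num)
        _ = D ^ ((3:ℝ)/2) * x ^ ((3 * (n:ℝ))/2) * ε ^ (-(3:ℝ)/2) := by
            rw [div_eq_mul_inv, Real.mul_rpow (by positivity) (by positivity),
              Real.mul_rpow (le_of_lt hDpos) hxn0,
              ← Real.rpow_natCast x n, ← Real.rpow_mul (le_of_lt hx0),
              ← Real.rpow_neg_one ε, ← Real.rpow_mul (le_of_lt hε)]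
            rw [show (n:ℝ) * (3/2) = 3 * (n:ℝ) / 2 from by ring,
              show (-1:ℝ) * (3/2) = -(3:ℝ)/2 from by norm_num]
    have hA1 : (M : ℝ) ≤ (2 * V + 2) * ε ^ ((-2:ℝ)) := by
      rw [Real.rpow_neg (le_of_lt hε), show ((2:ℝ)) = ((2:ℕ):ℝ) from by norm_num,
        Real.rpow_natCast]
      rw [div_eq_mul_inv] at hMup
      push_cast at hMup ⊢
      exact hMup
    have hwx : w L ≤ C₂ * x ^ n *
        (D ^ ((3:ℝ)/2) * x ^ ((3 * (n:ℝ))/2) * ε ^ (-(3:ℝ)/2)) := by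
      have hC2x : (0:ℝ) ≤ C₂ * x ^ n := by positivity
      have h := hw L
      rw [← hx] at h
      exact h.trans (mul_le_mul_of_nonneg_left h3L hC2x)
    have hεm32 : (0:ℝ) ≤ ε ^ (-(3:ℝ)/2) := Real.rpow_nonneg (le_of_lt hε) _
    have hεm2 : (0:ℝ) ≤ ε ^ ((-2:ℝ)) := Real.rpow_nonneg (le_of_lt hε) _
    have hxs : x ^ (n:ℕ) * x ^ ((3 * (n:ℝ))/2) = x ^ ((5 * (n:ℝ))/2) := by
      rw [← Real.rpow_natCast x n, ← Real.rpow_add hx0]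
      congr 1
      ring
    have hεs : ε ^ ((-2:ℝ)) * ε ^ (-(3:ℝ)/2) = ε ^ (-(7:ℝ)/2) := by
      rw [← Real.rpow_add hε]
      norm_num
    have hxB : x ^ ((5 * (n:ℝ))/2) ≤ B ^ ((5 * (n:ℝ))/2) * ℓ ^ ((5 * (n:ℝ))/2) := by
      calc x ^ ((5 * (n:ℝ))/2) ≤ (B * ℓ) ^ ((5 * (n:ℝ))/2) :=
            Real.rpow_le_rpow (le_of_lt hx0) hLB hℓq
        _ = B ^ ((5 * (n:ℝ))/2) * ℓ ^ ((5 * (n:ℝ))/2) :=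
            Real.mul_rpow (le_of_lt hBpos) (le_of_lt hℓpos)
    calc (M : ℝ) * w L
        ≤ ((2 * V + 2) * ε ^ ((-2:ℝ))) * (C₂ * x ^ n *
            (D ^ ((3:ℝ)/2) * x ^ ((3 * (n:ℝ))/2) * ε ^ (-(3:ℝ)/2))) := by
          exact mul_le_mul hA1 hwx (hw0 L) (by positivity)
      _ = ((2 * V + 2) * C₂ * D ^ ((3:ℝ)/2)) * (x ^ (n:ℕ) * x ^ ((3 * (n:ℝ))/2)) *
            (ε ^ ((-2:ℝ)) * ε ^ (-(3:ℝ)/2)) := by ring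
      _ = ((2 * V + 2) * C₂ * D ^ ((3:ℝ)/2)) * x ^ ((5 * (n:ℝ))/2) * ε ^ (-(7:ℝ)/2) := by
            rw [hxs, hεs]
      _ ≤ ((2 * V + 2) * C₂ * D ^ ((3:ℝ)/2)) *
            (B ^ ((5 * (n:ℝ))/2) * ℓ ^ ((5 * (n:ℝ))/2)) * ε ^ (-(7:ℝ)/2) := by
          have hc0 : (0:ℝ) ≤ (2 * V + 2) * C₂ * D ^ ((3:ℝ)/2) := by positivity
          have h := mul_le_mul_of_nonneg_left hxB hc0
          have hε7 : (0:ℝ) ≤ ε ^ (-(7:ℝ)/2) := Real.rpow_nonneg (le_of_lt hε) _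
          exact mul_le_mul_of_nonneg_right h hε7
      _ = (2 * V + 2) * C₂ * D ^ ((3:ℝ)/2) * B ^ ((5 * (n:ℝ))/2) * ε ^ (-(7:ℝ)/2) *
            ℓ ^ ((5 * (n:ℝ))/2) := by ring
end

section
/- (Multilevel Monte Carlo complexity on regular grids in dimension d ≥ 3.) Let d ≥ 3 be an integer and C₁, C₂, C₃ > 0. Let (e_l)_{l≥0}, (v_l)_{l≥0}, (w_l)_{l≥0} be sequences of nonnegative reals satisfying e_l ≤ C₁·2^{−2l}, v_l ≤ C₂·2^{−4l}, and w_l ≤ C₃·2^{(d+2)l} for all l. Then there exists C > 0 such that for every ε ∈ (0,1/2) there exist an integer L ≥ 0 and positive integers M₀,…,M_L with (∑_{l>L} e_l)² + ∑_{l=0}^{L} v_l/M_l ≤ ε² and ∑_{l=0}^{L} M_l·w_l ≤ C·ε^{−1−d/2}. -/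
lemma mlmc_geom_tail_le (t : ℝ) (h0 : 0 ≤ t) (h1 : t ≤ 3/4) (n : ℕ) :
    ∑ l ∈ Finset.range n, t ^ l ≤ 4 := by
  have h1' : t < 1 := lt_of_le_of_lt h1 (by norm_num)
  have hs := summable_geometric_of_lt_one h0 h1'
  calc ∑ l ∈ Finset.range n, t ^ l ≤ ∑' l : ℕ, t ^ l :=
        Summable.sum_le_tsum _ (fun i _ => pow_nonneg h0 i) hs
    _ = (1 - t)⁻¹ := tsum_geometric_of_lt_one h0 h1'
    _ ≤ 4 := by
        rw [inv_le_iff_one_le_mul₀ (by linarith)]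
        linarith

lemma mlmc_pow_inv_sub (s : ℝ) (hs : s ≠ 0) {l L : ℕ} (h : l ≤ L) :
    (s⁻¹) ^ (L - l) = (s⁻¹) ^ L * s ^ l := by
  rw [pow_sub₀ _ (inv_ne_zero hs) h]
  rw [inv_pow s l, inv_inv, inv_pow s L]

lemma mlmc_geom_incr_le (s : ℝ) (hs : 4/3 ≤ s) (L : ℕ) :
    ∑ l ∈ Finset.range (L+1), s ^ l ≤ 4 * s ^ L := by
  have hs0 : (0:ℝ) < s := lt_of_lt_of_le (by norm_num) hs
  rw [← Finset.sum_range_reflect]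
  simp only [Nat.add_sub_cancel]
  have hc : ∀ j ∈ Finset.range (L+1), s ^ (L - j) = s ^ L * (s⁻¹) ^ j := by
    intro j hj
    have hj' : j ≤ L := Nat.lt_succ_iff.mp (Finset.mem_range.mp hj)
    rw [pow_sub₀ _ (ne_of_gt hs0) hj', inv_pow]
  rw [Finset.sum_congr rfl hc, ← Finset.mul_sum, mul_comm (4:ℝ)]
  have hti : s⁻¹ ≤ 3/4 := by
    rw [inv_le_comm₀ hs0 (by norm_num)]
    linarith
  exact mul_le_mul_of_nonneg_left
    (mlmc_geom_tail_le s⁻¹ (inv_nonneg.mpr hs0.le) hti _) (pow_nonneg hs0.le L)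

set_option maxHeartbeats 1000000 in
/-- Multilevel Monte Carlo complexity on regular grids in dimension `d ≥ 3`:
total cost `O(ε^{−1−d/2})`. -/
theorem mlmc_regular_grid_complexity
    (d : ℕ) (hd : 3 ≤ d) (C₁ C₂ C₃ : ℝ) (hC₁ : 0 < C₁) (hC₂ : 0 < C₂) (hC₃ : 0 < C₃)
    (e v w : ℕ → ℝ)
    (he0 : ∀ l, 0 ≤ e l) (hv0 : ∀ l, 0 ≤ v l) (hw0 : ∀ l, 0 ≤ w l)
    (he : ∀ l, e l ≤ C₁ * ((2 : ℝ) ^ (2 * l))⁻¹)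
    (hv : ∀ l, v l ≤ C₂ * ((2 : ℝ) ^ (4 * l))⁻¹)
    (hw : ∀ l, w l ≤ C₃ * (2 : ℝ) ^ ((d + 2) * l)) :
    ∃ C : ℝ, 0 < C ∧ ∀ ε : ℝ, 0 < ε → ε < 1 / 2 →
      ∃ (L : ℕ) (M : ℕ → ℕ), (∀ l ≤ L, 0 < M l) ∧
        (∑' l : {n : ℕ // L < n}, e l) ^ 2
            + ∑ l ∈ Finset.range (L + 1), v l / (M l : ℝ) ≤ ε ^ 2 ∧
        ∑ l ∈ Finset.range (L + 1), (M l : ℝ) * w l ≤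
          C * ε ^ (-(1 : ℝ) - (d : ℝ) / 2) := by
  have hd3 : (3:ℝ) ≤ (d:ℝ) := by exact_mod_cast hd
  set p : ℝ := (d:ℝ)/2 - 1 with hpdef
  set q : ℝ := (d:ℝ)/2 + 1 with hqdef
  have hp2 : (1:ℝ)/2 ≤ p := by rw [hpdef]; linarith
  have hp0 : (0:ℝ) ≤ p := le_trans (by norm_num) hp2
  have hq0 : (0:ℝ) ≤ q := by rw [hqdef]; linarith
  set s : ℝ := (2:ℝ) ^ p with hsdef
  have hs0 : (0:ℝ) < s := Real.rpow_pos_of_pos (by norm_num) p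
  have hs43 : (4:ℝ)/3 ≤ s := by
    have h1 : ((4:ℝ)/3) ≤ (2:ℝ) ^ ((1:ℝ)/2) := by
      rw [← Real.sqrt_eq_rpow]
      nlinarith [Real.sq_sqrt (by norm_num : (0:ℝ) ≤ 2), Real.sqrt_nonneg 2]
    have h2 : (2:ℝ) ^ ((1:ℝ)/2) ≤ (2:ℝ) ^ p :=
      Real.rpow_le_rpow_left_iff (by norm_num : (1:ℝ) < 2) |>.mpr hp2
    exact le_trans h1 h2
  have hti : s⁻¹ ≤ 3/4 := by
    rw [inv_le_comm₀ hs0 (by norm_num)]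
    linarith
  set K : ℝ := C₁ + 1 with hKdef
  have hK1 : (1:ℝ) ≤ K := by rw [hKdef]; linarith
  have hK0 : (0:ℝ) < K := by linarith
  set A : ℝ := 8 * C₂ with hAdef
  have hA0 : (0:ℝ) < A := by rw [hAdef]; linarith
  have h4Kp : (0:ℝ) < (4*K) ^ p := Real.rpow_pos_of_pos (by linarith) p
  have h4Kq : (0:ℝ) < (4*K) ^ q := Real.rpow_pos_of_pos (by linarith) q
  refine ⟨4*A*C₃*(4*K)^p + 4*C₃*(4*K)^q, by positivity, ?_⟩
  intro ε hε hε2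
  have hKε2 : (2:ℝ) ≤ K/ε := by
    rw [le_div_iff₀ hε]; linarith
  -- choose L minimal with K/ε < 2^(2L)
  obtain ⟨L, hG1, hG2⟩ :
      ∃ L : ℕ, K/ε < (2:ℝ)^(2*L) ∧ (2:ℝ)^(2*L) ≤ 4*(K/ε) := by
    obtain ⟨n, hn⟩ := pow_unbounded_of_one_lt (K/ε) (by norm_num : (1:ℝ) < 2)
    have hex : ∃ m : ℕ, K/ε < (2:ℝ)^(2*m) :=
      ⟨n, lt_of_lt_of_le hn (pow_le_pow_right₀ (by norm_num) (by omega))⟩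
    refine ⟨Nat.find hex, Nat.find_spec hex, ?_⟩
    have hL0 : Nat.find hex ≠ 0 := by
      intro h
      have h2 := Nat.find_spec hex
      rw [h] at h2
      norm_num at h2
      linarith
    have hmin := Nat.find_min hex (show Nat.find hex - 1 < Nat.find hex by omega)
    push_neg at hmin
    have h2L : 2*(Nat.find hex) = 2*(Nat.find hex - 1) + 2 := by omega
    rw [h2L, pow_add]
    norm_num
    nlinarith [hmin]
  have hGpos : (0:ℝ) < (2:ℝ)^(2*L) := by positivity
  -- the sample numbers
  set B : ℕ → ℝ := fun l => A * (ε⁻¹)^2 * s^L * (s⁻¹)^l * ((16:ℝ)⁻¹)^l with hBdef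
  have hB0 : ∀ l, 0 < B l := by
    intro l
    have : (0:ℝ) < ε⁻¹ := by positivity
    positivity
  refine ⟨L, fun l => ⌈B l⌉₊, fun l _ => Nat.ceil_pos.mpr (hB0 l), ?_, ?_⟩
  · -- error bound
    have hbias : (∑' l : {n : ℕ // L < n}, e l) ≤ ε/3 := by
      rw [← Equiv.tsum_eq
        (⟨fun n => ⟨n + (L+1), by omega⟩, fun m => (m : ℕ) - (L+1),
          fun n => by simp,
          fun m => by
            apply Subtype.ext
            have := m.2
            simp
            omega⟩ : ℕ ≃ {n : ℕ // L < n})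
        (fun m : {n : ℕ // L < n} => e (m : ℕ))]
      have hgsum : Summable (fun n : ℕ => (C₁ * ((4:ℝ)⁻¹)^(L+1)) * ((4:ℝ)⁻¹)^n) :=
        (summable_geometric_of_lt_one (by norm_num) (by norm_num)).mul_left _
      have key : ∀ n : ℕ, e (n + (L+1)) ≤ (C₁ * ((4:ℝ)⁻¹)^(L+1)) * ((4:ℝ)⁻¹)^n := by
        intro n
        calc e (n + (L+1)) ≤ C₁ * ((2:ℝ)^(2*(n+(L+1))))⁻¹ := he _
          _ = (C₁ * ((4:ℝ)⁻¹)^(L+1)) * ((4:ℝ)⁻¹)^n := by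
              rw [pow_mul]
              norm_num
              rw [← inv_pow, pow_add]
              ring
      have hesum : Summable (fun n : ℕ => e (n + (L+1))) :=
        Summable.of_nonneg_of_le (fun n => he0 _) key hgsum
      have h4L : ((4:ℝ)⁻¹)^L ≤ ε/K := by
        have h4 : ((4:ℝ)⁻¹)^L = ((2:ℝ)^(2*L))⁻¹ := by
          rw [pow_mul, ← inv_pow]; norm_num
        rw [h4, ← inv_div K ε]
        exact inv_anti₀ (by positivity) hG1.le
      show (∑' n : ℕ, e (n + (L+1))) ≤ ε/3
      calc (∑' n : ℕ, e (n + (L+1)))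
          ≤ ∑' n : ℕ, (C₁ * ((4:ℝ)⁻¹)^(L+1)) * ((4:ℝ)⁻¹)^n :=
            Summable.tsum_le_tsum key hesum hgsum
        _ = (C₁ * ((4:ℝ)⁻¹)^(L+1)) * (1 - 4⁻¹)⁻¹ := by
            rw [tsum_mul_left, tsum_geometric_of_lt_one (by norm_num) (by norm_num)]
        _ ≤ ε/3 := by
            rw [pow_succ]
            have hC₁K : C₁ ≤ K := by rw [hKdef]; linarith
            have h1 : C₁ * (((4:ℝ)⁻¹)^L * 4⁻¹) * (1 - 4⁻¹)⁻¹
                = C₁ * ((4:ℝ)⁻¹)^L / 3 := by ring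
            rw [h1]
            have h2 : C₁ * ((4:ℝ)⁻¹)^L ≤ K * (ε/K) := by
              apply mul_le_mul hC₁K h4L (by positivity) hK0.le
            have h3 : K * (ε/K) = ε := by field_simp
            rw [h3] at h2
            linarith
    have hb0 : (0:ℝ) ≤ ∑' l : {n : ℕ // L < n}, e l :=
      tsum_nonneg (fun l => he0 _)
    have hbias2 : (∑' l : {n : ℕ // L < n}, e l)^2 ≤ (ε/3)^2 := by
      apply pow_le_pow_left₀ hb0 hbias
    have hvar : ∑ l ∈ Finset.range (L+1), v l / ((⌈B l⌉₊ : ℕ) : ℝ) ≤ ε^2/2 := by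
      have hterm : ∀ l ∈ Finset.range (L+1),
          v l / ((⌈B l⌉₊ : ℕ) : ℝ) ≤ (ε^2/8) * (s⁻¹)^(L-l) := by
        intro l hl
        have hl' : l ≤ L := Nat.lt_succ_iff.mp (Finset.mem_range.mp hl)
        have hMB : B l ≤ ((⌈B l⌉₊ : ℕ) : ℝ) := Nat.le_ceil _
        have hv16 : v l ≤ C₂ * ((16:ℝ)⁻¹)^l := by
          have : ((2:ℝ)^(4*l))⁻¹ = ((16:ℝ)⁻¹)^l := by
            rw [pow_mul, ← inv_pow]; norm_num
          rw [← this]; exact hv l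
        have h1 : v l / ((⌈B l⌉₊ : ℕ) : ℝ) ≤ (C₂ * ((16:ℝ)⁻¹)^l) / B l :=
          div_le_div₀ (by positivity) hv16 (hB0 l) hMB
        have h2 : (C₂ * ((16:ℝ)⁻¹)^l) / B l = (ε^2/8) * ((s⁻¹)^L * s^l) := by
          rw [hBdef]
          simp only [hAdef, inv_pow]
          have hsne := hs0.ne'
          field_simp
        rw [mlmc_pow_inv_sub s (ne_of_gt hs0) hl']
        calc v l / ((⌈B l⌉₊ : ℕ) : ℝ) ≤ (C₂ * ((16:ℝ)⁻¹)^l) / B l := h1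
          _ = (ε^2/8) * ((s⁻¹)^L * s^l) := h2
      calc ∑ l ∈ Finset.range (L+1), v l / ((⌈B l⌉₊ : ℕ) : ℝ)
          ≤ ∑ l ∈ Finset.range (L+1), (ε^2/8) * (s⁻¹)^(L-l) :=
            Finset.sum_le_sum hterm
        _ = (ε^2/8) * ∑ l ∈ Finset.range (L+1), (s⁻¹)^(L-l) := by
            rw [Finset.mul_sum]
        _ ≤ (ε^2/8) * 4 := by
            apply mul_le_mul_of_nonneg_left _ (by positivity)
            have hrefl := Finset.sum_range_reflect (fun l => (s⁻¹)^l) (L+1)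
            simp only [Nat.add_sub_cancel] at hrefl
            rw [hrefl]
            exact mlmc_geom_tail_le s⁻¹ (inv_nonneg.mpr hs0.le) hti _
        _ = ε^2/2 := by ring
    have : (ε/3)^2 + ε^2/2 ≤ ε^2 := by nlinarith
    calc (∑' l : {n : ℕ // L < n}, e l)^2
          + ∑ l ∈ Finset.range (L+1), v l / ((⌈B l⌉₊ : ℕ) : ℝ)
        ≤ (ε/3)^2 + ε^2/2 := add_le_add hbias2 hvar
      _ ≤ ε^2 := this
  · -- cost bound
    have hkey : s⁻¹ * (16:ℝ)⁻¹ * (2:ℝ)^(d+2) = s := by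
      have h16' : (2:ℝ)^((4:ℝ)) = 16 := by
        rw [show (4:ℝ) = ((4:ℕ):ℝ) by norm_num, Real.rpow_natCast]
        norm_num
      have h16 : ((16:ℝ))⁻¹ = (2:ℝ)^(-(4:ℝ)) := by
        rw [Real.rpow_neg (by norm_num), h16']
      have h2d : ((2:ℝ)^(d+2) : ℝ) = (2:ℝ)^(((d:ℝ)+2)) := by
        rw [show ((d:ℝ)+2) = (((d+2:ℕ)):ℝ) by push_cast; ring, Real.rpow_natCast]
      rw [hsdef, ← Real.rpow_neg (by norm_num : (0:ℝ) ≤ 2), h16, h2d,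
        ← Real.rpow_add (by norm_num), ← Real.rpow_add (by norm_num)]
      congr 1
      rw [hpdef]; ring
    have hterm : ∀ l ∈ Finset.range (L+1),
        ((⌈B l⌉₊ : ℕ) : ℝ) * w l ≤
          A*C₃*(ε⁻¹)^2 * s^L * s^l + C₃ * ((2:ℝ)^(d+2))^l := by
      intro l hl
      have hM : ((⌈B l⌉₊ : ℕ) : ℝ) ≤ B l + 1 := (Nat.ceil_lt_add_one (hB0 l).le).le
      have hwl : w l ≤ C₃ * ((2:ℝ)^(d+2))^l := by
        rw [← pow_mul]; exact hw l
      have hMpos : (0:ℝ) ≤ ((⌈B l⌉₊ : ℕ) : ℝ) := by positivity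
      calc ((⌈B l⌉₊ : ℕ) : ℝ) * w l
          ≤ (B l + 1) * (C₃ * ((2:ℝ)^(d+2))^l) := by
            apply mul_le_mul hM hwl (hw0 l) (by linarith [hB0 l])
        _ = A*C₃*(ε⁻¹)^2 * s^L * ((s⁻¹ * 16⁻¹ * (2:ℝ)^(d+2))^l)
              + C₃ * ((2:ℝ)^(d+2))^l := by
            rw [hBdef]
            simp only [mul_pow]
            ring
        _ = A*C₃*(ε⁻¹)^2 * s^L * s^l + C₃ * ((2:ℝ)^(d+2))^l := by rw [hkey]
    have hu43 : (4:ℝ)/3 ≤ (2:ℝ)^(d+2) := by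
      calc (4:ℝ)/3 ≤ 4 := by norm_num
        _ = 2^2 := by norm_num
        _ ≤ (2:ℝ)^(d+2) := pow_le_pow_right₀ (by norm_num) (by omega)
    -- rpow conversions
    have hsL : s^L * s^L ≤ (4*K)^p * ε^(-p) := by
      have e1 : s^L * s^L = ((2:ℝ)^(2*L)) ^ p := by
        rw [hsdef, ← Real.rpow_natCast ((2:ℝ)^p) L, ← Real.rpow_mul (by norm_num),
          ← Real.rpow_add (by norm_num),
          ← Real.rpow_natCast (2:ℝ) (2*L), ← Real.rpow_mul (by norm_num)]
        congr 1
        push_cast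
        ring
      calc s^L * s^L = ((2:ℝ)^(2*L)) ^ p := e1
        _ ≤ (4*(K/ε))^p := Real.rpow_le_rpow hGpos.le hG2 hp0
        _ = (4*K)^p * ε^(-p) := by
            rw [show 4*(K/ε) = (4*K)/ε by ring,
              Real.div_rpow (by positivity) hε.le, Real.rpow_neg hε.le,
              div_eq_mul_inv]
    have huL : ((2:ℝ)^(d+2))^L ≤ (4*K)^q * ε^(-q) := by
      have e1 : ((2:ℝ)^(d+2))^L = ((2:ℝ)^(2*L)) ^ q := by
        rw [← pow_mul, ← Real.rpow_natCast (2:ℝ) ((d+2)*L),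
          ← Real.rpow_natCast (2:ℝ) (2*L), ← Real.rpow_mul (by norm_num)]
        congr 1
        rw [hqdef]
        push_cast
        ring
      calc ((2:ℝ)^(d+2))^L = ((2:ℝ)^(2*L)) ^ q := e1
        _ ≤ (4*(K/ε))^q := Real.rpow_le_rpow hGpos.le hG2 hq0
        _ = (4*K)^q * ε^(-q) := by
            rw [show 4*(K/ε) = (4*K)/ε by ring,
              Real.div_rpow (by positivity) hε.le, Real.rpow_neg hε.le,
              div_eq_mul_inv]
    have eps1 : (ε⁻¹)^2 * ε^(-p) = ε ^ (-(1:ℝ) - (d:ℝ)/2) := by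
      rw [← Real.rpow_neg_one ε, ← Real.rpow_natCast (ε ^ ((-1:ℝ))) 2,
        ← Real.rpow_mul hε.le, ← Real.rpow_add hε]
      congr 1
      rw [hpdef]
      push_cast
      ring
    have eps2 : ε^(-q) = ε ^ (-(1:ℝ) - (d:ℝ)/2) := by
      congr 1
      rw [hqdef]
      ring
    calc ∑ l ∈ Finset.range (L+1), ((⌈B l⌉₊ : ℕ) : ℝ) * w l
        ≤ ∑ l ∈ Finset.range (L+1),
            (A*C₃*(ε⁻¹)^2 * s^L * s^l + C₃ * ((2:ℝ)^(d+2))^l) :=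
          Finset.sum_le_sum hterm
      _ = A*C₃*(ε⁻¹)^2 * s^L * (∑ l ∈ Finset.range (L+1), s^l)
            + C₃ * (∑ l ∈ Finset.range (L+1), ((2:ℝ)^(d+2))^l) := by
          rw [Finset.sum_add_distrib, Finset.mul_sum, Finset.mul_sum]
      _ ≤ A*C₃*(ε⁻¹)^2 * s^L * (4 * s^L) + C₃ * (4 * ((2:ℝ)^(d+2))^L) := by
          apply add_le_add
          · apply mul_le_mul_of_nonneg_left (mlmc_geom_incr_le s hs43 L) (by positivity)
          · apply mul_le_mul_of_nonneg_left (mlmc_geom_incr_le _ hu43 L) hC₃.le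
      _ = 4*A*C₃*(ε⁻¹)^2 * (s^L * s^L) + 4*C₃ * ((2:ℝ)^(d+2))^L := by ring
      _ ≤ 4*A*C₃*(ε⁻¹)^2 * ((4*K)^p * ε^(-p)) + 4*C₃ * ((4*K)^q * ε^(-q)) := by
          apply add_le_add
          · apply mul_le_mul_of_nonneg_left hsL (by positivity)
          · apply mul_le_mul_of_nonneg_left huL (by positivity)
      _ = (4*A*C₃*(4*K)^p + 4*C₃*(4*K)^q) * ε ^ (-(1:ℝ) - (d:ℝ)/2) := by
          rw [← eps1, eps2.trans eps1.symm]
          ring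
end
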